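/- arXiv:1110.5270 — 3 statements merged into one kernel-verified Lean document; each statement's English description precedes it below -/
import Mathlib

section
/- Define Z_n = Y_{n+1} − Y_n − 1 for n ≥ 1. Then for all n ≥ 1, Z_{n+3} = Z_{n+2} + Z_{n+1} + Z_n + 2. -/
open Filter Topology

noncomputable section

/-- Evaluation of a list of (sign, partial quotient) pairs as the continued
fraction `ε₁ / (a₁ + ε₂ / (a₂ + ⋯ + ε_l / a_l))`; the empty list evaluates to `0`. -/
def ocfEval : List (ℤ × ℕ) → ℚ
  | [] => 0
  | (e, a) :: t => (e : ℚ) / ((a : ℚ) + ocfEval t)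

/-- Structural validity of a list of (sign, partial quotient) pairs for an odd
continued fraction: all partial quotients are odd positive integers, all signs
are `±1`, `a_j + ε_{j+1} ≥ 2` for consecutive terms, and the last sign is `1`
whenever the last partial quotient is `1`. -/
def ocfValid : List (ℤ × ℕ) → Prop
  | [] => True
  | [(e, a)] => (e = 1 ∨ e = -1) ∧ Odd a ∧ 0 < a ∧ (a = 1 → e = 1)
  | (e, a) :: (e', a') :: t =>
      (e = 1 ∨ e = -1) ∧ Odd a ∧ 0 < a ∧ 2 ≤ (a : ℤ) + e' ∧ ocfValid ((e', a') :: t)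

/-- `L` is a zero-based odd continued fraction expansion of the rational `x`,
i.e. `x = [0; ε₁/a₁, …, ε_l/a_l]` with first sign `ε₁ = 1`. -/
def ZeroRep (x : ℚ) (L : List (ℤ × ℕ)) : Prop :=
  ocfValid L ∧ (∀ e a t, L = (e, a) :: t → e = 1) ∧ x = ocfEval L

/-- `L` is an odd continued fraction expansion of the rational `x`,
i.e. `x = [1; ε₁/a₁, …, ε_l/a_l] = 1 + ε₁/(a₁ + ⋯)` with first sign `ε₁ = -1`. -/
def OneRep (x : ℚ) (L : List (ℤ × ℕ)) : Prop :=
  ocfValid L ∧ (∀ e a t, L = (e, a) :: t → e = -1) ∧ x = 1 + ocfEval L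

/-- Sum of the partial quotients of a list. -/
def qsum (L : List (ℤ × ℕ)) : ℕ := (L.map Prod.snd).sum

/-- `Sone x`: the sum of the partial quotients of the odd continued fraction
expansion `x = [1; ε₁/a₁, …, ε_l/a_l]` of a rational `x`. -/
def Sone (x : ℚ) : ℕ := sInf (qsum '' {L | OneRep x L})

/-- `Szero x`: the sum of the partial quotients of the zero-based odd continued
fraction expansion `x = [0; ε₁/a₁, …, ε_l/a_l]` of a rational `x`. -/
def Szero (x : ℚ) : ℕ := sInf (qsum '' {L | ZeroRep x L})

/-- `Mset n = {x ∈ ℚ ∩ [0,1] : S(x) ≤ n + 1}`. -/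
def Mset (n : ℕ) : Set ℚ := {x | 0 ≤ x ∧ x ≤ 1 ∧ Sone x ≤ n + 1}

/-- `Yset n = 𝒴_n = {x ∈ ℚ ∩ [0,1] : S⁰(x) ≤ n + 1}`. -/
def Yset (n : ℕ) : Set ℚ := {x | 0 ≤ x ∧ x ≤ 1 ∧ Szero x ≤ n + 1}

/-- `Xset k = 𝒳_k = {x ∈ ℚ ∩ [0,1] : S⁰(x) = k + 1}`. -/
def Xset (k : ℕ) : Set ℚ := {x | 0 ≤ x ∧ x ≤ 1 ∧ Szero x = k + 1}

/-- `Y_n`, the cardinality of `𝒴_n`. -/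
def Ycard (n : ℕ) : ℕ := (Yset n).ncard

/-- `X_k`, the cardinality of `𝒳_k`. -/
def Xcard (k : ℕ) : ℕ := (Xset k).ncard

/-- `Z_n = Y_{n+1} - Y_n - 1`. -/
def Zcard (n : ℕ) : ℤ := (Ycard (n + 1) : ℤ) - (Ycard n : ℤ) - 1

/-- The distribution function `F_n(x) = #{ξ ∈ M_n : ξ ≤ x} / #M_n`. -/
def Fn (n : ℕ) (x : ℝ) : ℝ :=
  ((Mset n ∩ {ξ : ℚ | (ξ : ℝ) ≤ x}).ncard : ℝ) / ((Mset n).ncard : ℝ)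

/-- The distribution function `F⁰_n(x) = #{ξ ∈ 𝒴_n : ξ ≤ x} / Y_n`. -/
def F0n (n : ℕ) (x : ℝ) : ℝ :=
  ((Yset n ∩ {ξ : ℚ | (ξ : ℝ) ≤ x}).ncard : ℝ) / (Ycard n : ℝ)

/-- The limit distribution function `F(x) = lim_{n → ∞} F_n(x)`. -/
def F (x : ℝ) : ℝ := limUnder atTop fun n => Fn n x

/-- The limit distribution function `F⁰(x) = lim_{n → ∞} F⁰_n(x)`. -/
def F0 (x : ℝ) : ℝ := limUnder atTop fun n => F0n n x

/-- The mediant `(a + c) / (b + d)` of two rationals `a/b`, `c/d` in lowest terms. -/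
def mediant (x y : ℚ) : ℚ := ((x.num + y.num : ℤ) : ℚ) / ((x.den + y.den : ℕ) : ℚ)

/-- The Stern–Brocot sequences: `𝔉₀ = {0, 1}` and `𝔉_{n+1}` is obtained from
`𝔉_n` by inserting the mediant of every pair of consecutive elements of `𝔉_n`. -/
def SB : ℕ → Set ℚ
  | 0 => {0, 1}
  | n + 1 => SB n ∪ {z | ∃ x y, x ∈ SB n ∧ y ∈ SB n ∧ x < y ∧
      (∀ t ∈ SB n, t ≤ x ∨ y ≤ t) ∧ z = mediant x y}

/-- `x < y` are consecutive elements of the Stern–Brocot sequence `𝔉_n`. -/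
def SBConsecutive (n : ℕ) (x y : ℚ) : Prop :=
  x ∈ SB n ∧ y ∈ SB n ∧ x < y ∧ ∀ t ∈ SB n, t ≤ x ∨ y ≤ t

/-- Evaluation of an ordinary continued fraction `[0; b₁, …, b_l] = 1/(b₁ + 1/(b₂ + ⋯))`. -/
def cfEval : List ℕ → ℚ
  | [] => 0
  | b :: t => 1 / ((b : ℚ) + cfEval t)

namespace Thm11Aux

lemma qsum_nil : qsum [] = 0 := rfl

lemma qsum_cons (p : ℤ × ℕ) (t : List (ℤ × ℕ)) : qsum (p :: t) = p.2 + qsum t := by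
  simp [qsum]

lemma valid_head {e : ℤ} {a : ℕ} {t : List (ℤ × ℕ)} (h : ocfValid ((e, a) :: t)) :
    (e = 1 ∨ e = -1) ∧ Odd a ∧ 0 < a := by
  cases t with
  | nil => exact ⟨h.1, h.2.1, h.2.2.1⟩
  | cons p t' => obtain ⟨e', a'⟩ := p; exact ⟨h.1, h.2.1, h.2.2.1⟩

lemma valid_tail {e : ℤ} {a : ℕ} {t : List (ℤ × ℕ)} (h : ocfValid ((e, a) :: t)) :
    ocfValid t := by
  cases t with
  | nil => trivial
  | cons p t' => obtain ⟨e', a'⟩ := p; exact h.2.2.2.2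

lemma valid_cons_cons {e : ℤ} {a : ℕ} {e' : ℤ} {a' : ℕ} {t : List (ℤ × ℕ)}
    (h : ocfValid ((e, a) :: (e', a') :: t)) : 2 ≤ (a : ℤ) + e' := h.2.2.2.1

lemma valid_singleton {e : ℤ} {a : ℕ} (h : ocfValid [(e, a)]) (ha : a = 1) : e = 1 :=
  h.2.2.2 ha

lemma valid_cons' {e : ℤ} {a : ℕ} {e' : ℤ} {a' : ℕ} {t : List (ℤ × ℕ)}
    (he : e = 1 ∨ e = -1) (ho : Odd a) (hp : 0 < a) (h2 : 2 ≤ (a : ℤ) + e')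
    (hv : ocfValid ((e', a') :: t)) : ocfValid ((e, a) :: (e', a') :: t) :=
  ⟨he, ho, hp, h2, hv⟩

lemma valid_single' {e : ℤ} {a : ℕ} (he : e = 1 ∨ e = -1) (ho : Odd a) (hp : 0 < a)
    (h1 : a = 1 → e = 1) : ocfValid [(e, a)] := ⟨he, ho, hp, h1⟩

lemma one_div_bounds {w : ℚ} (hw : 1 ≤ w) : 0 < 1 / w ∧ 1 / w ≤ 1 :=
  ⟨div_pos one_pos (by linarith), (div_le_one (by linarith)).2 hw⟩

lemma neg_one_div_bounds {w : ℚ} (hw : 1 < w) : -1 < -(1 / w) ∧ -(1 / w) < 0 := by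
  have h1 : 0 < 1 / w := div_pos one_pos (by linarith)
  have h2 : 1 / w < 1 := (div_lt_one (by linarith)).2 hw
  constructor <;> linarith

lemma eval_props : ∀ (t : List (ℤ × ℕ)) (e : ℤ) (a : ℕ), ocfValid ((e, a) :: t) →
    1 ≤ (a : ℚ) + ocfEval t ∧
    (e = 1 → 0 < ocfEval ((e, a) :: t) ∧ ocfEval ((e, a) :: t) ≤ 1) ∧
    (e = -1 → -1 < ocfEval ((e, a) :: t) ∧ ocfEval ((e, a) :: t) < 0) := by
  intro t
  induction t with
  | nil =>
    intro e a h
    obtain ⟨he, hodd, ha⟩ := valid_head h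
    have ha1 : (1 : ℚ) ≤ (a : ℚ) := by exact_mod_cast ha
    have h0 : ocfEval ([] : List (ℤ × ℕ)) = 0 := rfl
    refine ⟨by rw [h0]; linarith, ?_, ?_⟩
    · rintro rfl
      have he2 : ocfEval [((1 : ℤ), a)] = 1 / ((a : ℚ) + ocfEval []) := by
        show ((1 : ℤ) : ℚ) / _ = _
        push_cast
        ring
      rw [he2, h0, add_zero]
      exact one_div_bounds ha1
    · rintro rfl
      have hane : a ≠ 1 := by
        intro h1
        have := valid_singleton h h1
        norm_num at this
      have ha2 : (2 : ℚ) ≤ (a : ℚ) := by exact_mod_cast (by omega : 2 ≤ a)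
      have he2 : ocfEval [((-1 : ℤ), a)] = -(1 / ((a : ℚ) + ocfEval [])) := by
        show ((-1 : ℤ) : ℚ) / _ = _
        push_cast
        ring
      rw [he2, h0, add_zero]
      exact neg_one_div_bounds (by linarith)
  | cons p t' ih =>
    obtain ⟨e', a'⟩ := p
    intro e a h
    have hv' : ocfValid ((e', a') :: t') := valid_tail h
    have h2 : 2 ≤ (a : ℤ) + e' := valid_cons_cons h
    obtain ⟨he, hodd, ha⟩ := valid_head h
    obtain ⟨he', _, _⟩ := valid_head hv'
    obtain ⟨_, ih1, ih2⟩ := ih e' a' hv'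
    have ha1 : (1 : ℚ) ≤ (a : ℚ) := by exact_mod_cast ha
    have hw : 1 < (a : ℚ) + ocfEval ((e', a') :: t') := by
      rcases he' with rfl | rfl
      · have := ih1 rfl; linarith [this.1]
      · have := ih2 rfl
        have ha3 : (3 : ℚ) ≤ (a : ℚ) := by exact_mod_cast (by omega : (3 : ℤ) ≤ (a : ℤ))
        linarith [this.1]
    refine ⟨by linarith, ?_, ?_⟩
    · rintro rfl
      have he2 : ocfEval (((1 : ℤ), a) :: (e', a') :: t')
          = 1 / ((a : ℚ) + ocfEval ((e', a') :: t')) := by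
        show ((1 : ℤ) : ℚ) / _ = _
        push_cast
        ring
      rw [he2]
      exact one_div_bounds (by linarith)
    · rintro rfl
      have he2 : ocfEval (((-1 : ℤ), a) :: (e', a') :: t')
          = -(1 / ((a : ℚ) + ocfEval ((e', a') :: t'))) := by
        show ((-1 : ℤ) : ℚ) / _ = _
        push_cast
        ring
      rw [he2]
      exact neg_one_div_bounds hw

lemma eval_bounds_tail {t : List (ℤ × ℕ)} (h : ocfValid t) :
    -1 < ocfEval t ∧ ocfEval t ≤ 1 := by
  cases t with
  | nil => norm_num [ocfEval]
  | cons p t' =>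
    obtain ⟨e, a⟩ := p
    obtain ⟨he, _, _⟩ := valid_head h
    obtain ⟨_, h1, h2⟩ := eval_props t' e a h
    rcases he with rfl | rfl
    · obtain ⟨u, v⟩ := h1 rfl; exact ⟨by linarith, v⟩
    · obtain ⟨u, v⟩ := h2 rfl; exact ⟨u, by linarith⟩

lemma eval_ne_zero {e : ℤ} {a : ℕ} {t : List (ℤ × ℕ)} (h : ocfValid ((e, a) :: t)) :
    ocfEval ((e, a) :: t) ≠ 0 := by
  obtain ⟨he, _, _⟩ := valid_head h
  obtain ⟨_, h1, h2⟩ := eval_props t e a h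
  rcases he with rfl | rfl
  · exact ne_of_gt (h1 rfl).1
  · exact ne_of_lt (h2 rfl).2

end Thm11Aux
namespace Thm11Aux

lemma eval_sign_pos {e : ℤ} {a : ℕ} {t : List (ℤ × ℕ)} (h : ocfValid ((e, a) :: t))
    (hx : 0 < ocfEval ((e, a) :: t)) : e = 1 := by
  obtain ⟨he, _, _⟩ := valid_head h
  obtain ⟨_, _, h2⟩ := eval_props t e a h
  rcases he with rfl | rfl
  · rfl
  · exact absurd hx (by linarith [(h2 rfl).2])

lemma eval_eq_div {e : ℤ} {a : ℕ} {t : List (ℤ × ℕ)} :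
    ocfEval ((e, a) :: t) = (e : ℚ) / ((a : ℚ) + ocfEval t) := rfl

lemma eval_injective : ∀ (L L' : List (ℤ × ℕ)), ocfValid L → ocfValid L' →
    ocfEval L = ocfEval L' → L = L' := by
  intro L
  induction L with
  | nil =>
    intro L' _ hv' he
    cases L' with
    | nil => rfl
    | cons p t =>
      obtain ⟨e, a⟩ := p
      exact absurd he.symm (eval_ne_zero hv')
  | cons p t ih =>
    obtain ⟨e, a⟩ := p
    intro L' hv hv' he
    cases L' with
    | nil => exact absurd he (eval_ne_zero hv)
    | cons p' t' =>
      obtain ⟨e₁, a₁⟩ := p'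
      -- signs agree
      obtain ⟨hes, _, _⟩ := valid_head hv
      obtain ⟨hes', _, _⟩ := valid_head hv'
      obtain ⟨hd, h1, h2⟩ := eval_props t e a hv
      obtain ⟨hd', h1', h2'⟩ := eval_props t' e₁ a₁ hv'
      have hee : e = e₁ := by
        rcases hes with rfl | rfl <;> rcases hes' with rfl | rfl
        · rfl
        · exact absurd (he ▸ (h1 rfl).1) (by linarith [(h2' rfl).2])
        · exact absurd (he ▸ (h2 rfl).2) (by linarith [(h1' rfl).1])
        · rfl
      subst hee
      have hene : (e : ℚ) ≠ 0 := by
        rcases hes with rfl | rfl <;> norm_num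
      have hwpos : (0 : ℚ) < (a : ℚ) + ocfEval t := by linarith
      have hwpos' : (0 : ℚ) < (a₁ : ℚ) + ocfEval t' := by linarith
      have hweq : (a : ℚ) + ocfEval t = (a₁ : ℚ) + ocfEval t' := by
        rw [eval_eq_div, eval_eq_div, div_eq_div_iff (by linarith) (by linarith)] at he
        exact mul_left_cancel₀ hene (by linarith [he])
      -- bounds on tails
      obtain ⟨hb1, hb2⟩ := eval_bounds_tail (valid_tail hv)
      obtain ⟨hb1', hb2'⟩ := eval_bounds_tail (valid_tail hv')
      have haa : a = a₁ := by
        have c1 : (a : ℚ) < (a₁ : ℚ) + 2 := by linarith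
        have c2 : (a₁ : ℚ) < (a : ℚ) + 2 := by linarith
        have c1' : a < a₁ + 2 := by exact_mod_cast c1
        have c2' : a₁ < a + 2 := by exact_mod_cast c2
        have hodd : Odd a := (valid_head hv).2.1
        have hodd' : Odd a₁ := (valid_head hv').2.1
        rw [Nat.odd_iff] at hodd hodd'
        omega
      subst haa
      have hteq : ocfEval t = ocfEval t' := by linarith
      rw [ih t' (valid_tail hv) (valid_tail hv') hteq]

end Thm11Aux
namespace Thm11Aux

lemma num_div_le {N D : ℤ} (hN : 0 ≤ N) (hD : 0 < D) : ((N : ℚ) / (D : ℚ)).num ≤ N := by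
  set q := (N : ℚ) / (D : ℚ) with hq
  have hq' : q = Rat.divInt N D := by rw [hq, Rat.divInt_eq_div]
  have hden : (q.den : ℤ) ∣ D := by rw [hq']; exact Rat.den_dvd N D
  have hden_le : (q.den : ℤ) ≤ D := Int.le_of_dvd hD hden
  have hden_pos : (0 : ℤ) < (q.den : ℤ) := by exact_mod_cast q.pos
  have hcross : (q.num : ℚ) * (D : ℚ) = (N : ℚ) * (q.den : ℚ) := by
    have h1 : (q.num : ℚ) / (q.den : ℚ) = (N : ℚ) / (D : ℚ) := by
      rw [Rat.num_div_den q]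
    rw [div_eq_div_iff (by positivity) (by exact_mod_cast hD.ne')] at h1
    exact h1
  have hcross' : q.num * D = N * q.den := by exact_mod_cast hcross
  nlinarith [mul_le_mul_of_nonneg_left hden_le hN]

lemma eval_flip {a : ℕ} {t : List (ℤ × ℕ)} :
    ocfEval (((-1 : ℤ), a) :: t) = -ocfEval (((1 : ℤ), a) :: t) := by
  rw [eval_eq_div, eval_eq_div]
  push_cast
  ring

lemma eval_one_one : ocfEval [((1 : ℤ), 1)] = 1 := by
  rw [eval_eq_div]
  norm_num [ocfEval]

lemma exists_rep : ∀ (n : ℕ) (x : ℚ), x.num.toNat ≤ n → 0 < x → x ≤ 1 →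
    ∃ (a : ℕ) (t : List (ℤ × ℕ)), ocfValid (((1 : ℤ), a) :: t) ∧
      ocfEval (((1 : ℤ), a) :: t) = x := by
  intro n
  induction n using Nat.strong_induction_on with
  | _ n ih =>
  intro x hn hx hx1
  have hr1 : 1 ≤ x⁻¹ := one_le_inv_iff₀.mpr ⟨hx, hx1⟩
  set r : ℚ := x⁻¹ with hrdef
  set m : ℤ := ⌈r⌉ with hmdef
  have hmu : r ≤ (m : ℚ) := Int.le_ceil r
  have hml : (m : ℚ) < r + 1 := Int.ceil_lt_add_one r
  have hm1 : 1 ≤ m := by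
    have h1 : (1 : ℚ) ≤ (m : ℚ) := le_trans hr1 hmu
    exact_mod_cast h1
  set aZ : ℤ := if Odd m then m else m - 1 with hadef
  have haodd : Odd aZ := by
    rw [hadef]; split_ifs with h
    · exact h
    · rw [Int.odd_iff] at h ⊢; omega
  have ha1 : 1 ≤ aZ := by
    rw [hadef]; split_ifs with h
    · exact hm1
    · rw [Int.odd_iff] at h; omega
  set v : ℚ := r - (aZ : ℚ) with hvdef
  have hvu : v ≤ 1 := by
    rw [hvdef, hadef]; split_ifs
    · linarith
    · push_cast; linarith
  have hvl : -1 < v := by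
    rw [hvdef, hadef]; split_ifs
    · push_cast; linarith
    · push_cast; linarith
  have hva1 : aZ = 1 → 0 ≤ v := by
    intro h; rw [hvdef, h]; push_cast; linarith
  set a : ℕ := aZ.toNat with handef
  have haZ : (a : ℤ) = aZ := Int.toNat_of_nonneg (by omega)
  have haQ : (a : ℚ) = (aZ : ℚ) := by exact_mod_cast haZ
  have haodd' : Odd a := by
    rw [Int.odd_iff] at haodd; rw [Nat.odd_iff]; omega
  have hapos : 0 < a := by omega
  have hrpos : (0 : ℚ) < r := by linarith
  have hxr : x = 1 / r := by rw [hrdef, one_div, inv_inv]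
  by_cases hv0 : v = 0
  · refine ⟨a, [], valid_single' (Or.inl rfl) haodd' hapos (fun _ => rfl), ?_⟩
    rw [eval_eq_div]
    have h0 : ocfEval ([] : List (ℤ × ℕ)) = 0 := rfl
    have har : (a : ℚ) = r := by
      rw [hvdef] at hv0; rw [haQ]; linarith
    rw [h0, add_zero, har, hxr]
    push_cast; ring
  · by_cases hv1 : v = 1
    · refine ⟨a, [((1 : ℤ), 1)], ?_, ?_⟩
      · exact valid_cons' (Or.inl rfl) haodd' hapos (by omega)
          (valid_single' (Or.inl rfl) odd_one one_pos (fun _ => rfl))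
      · rw [eval_eq_div, eval_one_one]
        have har : (a : ℚ) + 1 = r := by
          rw [hvdef] at hv1; rw [haQ]; linarith
        rw [har, hxr]
        push_cast; ring
    · have hvne : v ≠ 0 := hv0
      have hyl : 0 < |v| := abs_pos.mpr hvne
      have hyu : |v| < 1 := abs_lt.mpr ⟨hvl, lt_of_le_of_ne hvu hv1⟩
      have hnumpos : 0 < x.num := Rat.num_pos.mpr hx
      have hdec : (|v|).num < x.num := by
        set N : ℤ := (x.den : ℤ) - aZ * x.num with hNdef
        have hD : 0 < x.num := hnumpos
        have hDQ : (0 : ℚ) < (x.num : ℚ) := by exact_mod_cast hD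
        have hinv : x⁻¹ = (x.den : ℚ) / (x.num : ℚ) := by
          rw [Rat.inv_def, Rat.divInt_eq_div]; push_cast; ring
        have hveq : v = (N : ℚ) / (x.num : ℚ) := by
          rw [hvdef, hrdef, hinv, hNdef]
          push_cast
          field_simp
        have habs : |v| = ((|N| : ℤ) : ℚ) / (x.num : ℚ) := by
          rw [hveq, abs_div, abs_of_pos hDQ, Int.cast_abs]
        have hnum_le : (|v|).num ≤ |N| := by
          rw [habs]; exact num_div_le (abs_nonneg N) hD
        have hNlt : |N| < x.num := by
          rw [habs] at hyu
          rw [div_lt_one hDQ] at hyu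
          exact_mod_cast hyu
        omega
      obtain ⟨a', t', hval', heval'⟩ :=
        ih ((|v|).num.toNat) (by omega) (|v|) le_rfl hyl (le_of_lt hyu)
      rcases lt_or_gt_of_ne hvne with hneg | hpos
      · -- v < 0 : need a ≥ 3, flip the tail
        have ha3 : 3 ≤ aZ := by
          rw [Int.odd_iff] at haodd
          have : aZ ≠ 1 := by
            intro h; have := hva1 h; linarith
          omega
        have ha'ne1 : ¬(a' = 1 ∧ t' = []) := by
          rintro ⟨rfl, rfl⟩
          rw [eval_one_one] at heval'
          rw [← heval'] at hyu
          norm_num at hyu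
        have hvalflip : ocfValid (((-1 : ℤ), a') :: t') := by
          cases t' with
          | nil =>
            exact valid_single' (Or.inr rfl) (valid_head hval').2.1
              (valid_head hval').2.2 (fun h1 => absurd ⟨h1, rfl⟩ ha'ne1)
          | cons p'' t'' =>
            obtain ⟨e'', a''⟩ := p''
            exact valid_cons' (Or.inr rfl) (valid_head hval').2.1
              (valid_head hval').2.2 (valid_cons_cons hval') (valid_tail hval')
        refine ⟨a, ((-1 : ℤ), a') :: t',
          valid_cons' (Or.inl rfl) haodd' hapos (by omega) hvalflip, ?_⟩
        rw [eval_eq_div, eval_flip, heval', abs_of_neg hneg, neg_neg]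
        have har : (a : ℚ) + v = r := by rw [haQ, hvdef]; ring
        rw [har, hxr]
        push_cast; ring
      · -- v > 0
        refine ⟨a, ((1 : ℤ), a') :: t',
          valid_cons' (Or.inl rfl) haodd' hapos (by omega) hval', ?_⟩
        rw [eval_eq_div, heval', abs_of_pos hpos]
        have har : (a : ℚ) + v = r := by rw [haQ, hvdef]; ring
        rw [har, hxr]
        push_cast; ring

end Thm11Aux
namespace Thm11Aux

def zvalid (L : List (ℤ × ℕ)) : Prop :=
  ocfValid L ∧ ∀ e (a : ℕ) t, L = (e, a) :: t → e = (1 : ℤ)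

def WL (m : ℕ) : Set (List (ℤ × ℕ)) := {L | zvalid L ∧ qsum L ≤ m}
def ZL (s : ℕ) : Set (List (ℤ × ℕ)) := {L | zvalid L ∧ qsum L = s}
def CL (s : ℕ) : Set (List (ℤ × ℕ)) := {L | ocfValid L ∧ qsum L = s}
def HE (b s : ℕ) : Set (List (ℤ × ℕ)) :=
  {L | zvalid L ∧ qsum L = s ∧ ∃ t, L = ((1 : ℤ), b) :: t}
def HS (b s : ℕ) : Set (List (ℤ × ℕ)) :=
  {L | zvalid L ∧ qsum L = s ∧ ∃ a t, b ≤ a ∧ L = ((1 : ℤ), a) :: t}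

lemma zeroRep_iff {x : ℚ} {L : List (ℤ × ℕ)} :
    ZeroRep x L ↔ zvalid L ∧ x = ocfEval L := by
  constructor
  · rintro ⟨h1, h2, h3⟩; exact ⟨⟨h1, h2⟩, h3⟩
  · rintro ⟨⟨h1, h2⟩, h3⟩; exact ⟨h1, h2, h3⟩

lemma zeroRep_unique {x : ℚ} {L L' : List (ℤ × ℕ)} (h : ZeroRep x L)
    (h' : ZeroRep x L') : L = L' :=
  eval_injective L L' h.1 h'.1 (by rw [← h.2.2, ← h'.2.2])

lemma Szero_rep {x : ℚ} {L : List (ℤ × ℕ)} (h : ZeroRep x L) : Szero x = qsum L := by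
  have hset : {L' | ZeroRep x L'} = {L} := by
    ext L'
    simp only [Set.mem_setOf_eq, Set.mem_singleton_iff]
    exact ⟨fun h' => zeroRep_unique h' h, fun h' => h' ▸ h⟩
  rw [Szero, hset, Set.image_singleton, csInf_singleton]

lemma zeroRep_bounds {x : ℚ} {L : List (ℤ × ℕ)} (h : ZeroRep x L) : 0 ≤ x ∧ x ≤ 1 := by
  cases L with
  | nil =>
    rw [h.2.2]
    norm_num [ocfEval]
  | cons p t =>
    obtain ⟨e, a⟩ := p
    have he : e = 1 := h.2.1 e a t rfl
    subst he
    obtain ⟨_, h1, _⟩ := eval_props t 1 a h.1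
    obtain ⟨u, w⟩ := h1 rfl
    rw [h.2.2]
    exact ⟨le_of_lt u, w⟩

lemma exists_zeroRep (x : ℚ) (h0 : 0 ≤ x) (h1 : x ≤ 1) : ∃ L, ZeroRep x L := by
  rcases eq_or_lt_of_le h0 with h | h
  · exact ⟨[], trivial, by simp, h.symm⟩
  · obtain ⟨a, t, hv, he⟩ := exists_rep x.num.toNat x le_rfl h h1
    refine ⟨((1 : ℤ), a) :: t, hv, ?_, he.symm⟩
    intro e a' t' heq
    injection heq with hh _
    injection hh with h3 _
    exact h3.symm

lemma Yset_eq (n : ℕ) : Yset n = ocfEval '' WL (n + 1) := by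
  ext x
  constructor
  · rintro ⟨h0, h1, hS⟩
    obtain ⟨L, hL⟩ := exists_zeroRep x h0 h1
    refine ⟨L, ⟨(zeroRep_iff.mp hL).1, ?_⟩, (hL.2.2).symm⟩
    rw [← Szero_rep hL]; exact hS
  · rintro ⟨L, ⟨hzv, hq⟩, rfl⟩
    have hrep : ZeroRep (ocfEval L) L := zeroRep_iff.mpr ⟨hzv, rfl⟩
    obtain ⟨u, w⟩ := zeroRep_bounds hrep
    exact ⟨u, w, by rw [Szero_rep hrep]; exact hq⟩

lemma length_le_qsum {L : List (ℤ × ℕ)} (h : ocfValid L) : L.length ≤ qsum L := by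
  induction L with
  | nil => simp [qsum]
  | cons p t ih =>
    obtain ⟨e, a⟩ := p
    have h1 := (valid_head h).2.2
    have h2 := ih (valid_tail h)
    rw [qsum_cons, List.length_cons]
    omega

lemma entry_bound {L : List (ℤ × ℕ)} (h : ocfValid L) :
    ∀ p ∈ L, (p.1 = 1 ∨ p.1 = -1) ∧ p.2 ≤ qsum L := by
  induction L with
  | nil => simp
  | cons q t ih =>
    obtain ⟨e, a⟩ := q
    intro p hp
    rcases List.mem_cons.mp hp with rfl | hp'
    · exact ⟨(valid_head h).1, by rw [qsum_cons]; omega⟩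
    · obtain ⟨u, w⟩ := ih (valid_tail h) p hp'
      refine ⟨u, ?_⟩
      rw [qsum_cons]
      omega

lemma map_inj_lists {α β : Type*} (g : α → β) (P : α → Prop)
    (hg : ∀ a b, P a → P b → g a = g b → a = b) :
    ∀ L1 L2 : List α, (∀ x ∈ L1, P x) → (∀ x ∈ L2, P x) →
      L1.map g = L2.map g → L1 = L2 := by
  intro L1
  induction L1 with
  | nil =>
    intro L2 _ _ h
    cases L2 with
    | nil => rfl
    | cons b t => simp at h
  | cons a t ih =>
    intro L2 h1 h2 h
    cases L2 with
    | nil => simp at h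
    | cons b t2 =>
      simp only [List.map_cons, List.cons.injEq] at h
      have hab : a = b := hg a b (h1 a (by simp)) (h2 b (by simp)) h.1
      have ht : t = t2 :=
        ih t2 (fun x hx => h1 x (by simp [hx])) (fun x hx => h2 x (by simp [hx])) h.2
      rw [hab, ht]

lemma VL_finite (m : ℕ) : {L : List (ℤ × ℕ) | ocfValid L ∧ qsum L ≤ m}.Finite := by
  classical
  set g : ℤ × ℕ → Bool × Fin (m + 1) :=
    fun p => (decide (p.1 = 1), ⟨min p.2 m, by omega⟩) with hgdef
  apply Set.Finite.of_finite_image (f := List.map g)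
  · apply (List.finite_length_le (Bool × Fin (m + 1)) m).subset
    rintro y ⟨L, ⟨hv, hq⟩, rfl⟩
    simpa using (length_le_qsum hv).trans hq
  · intro L1 h1 L2 h2 heq
    refine map_inj_lists g (fun p => (p.1 = 1 ∨ p.1 = -1) ∧ p.2 ≤ m) ?_ L1 L2
      (fun p hp => ?_) (fun p hp => ?_) heq
    · rintro p q hp hq hpq
      simp only [hgdef, Prod.mk.injEq, Fin.mk.injEq, decide_eq_decide] at hpq
      obtain ⟨u1, u2⟩ := hpq
      have e2 : p.2 = q.2 := by omega
      have e1 : p.1 = q.1 := by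
        by_cases hp1 : p.1 = 1
        · exact hp1.trans (u1.mp hp1).symm
        · have hp1' : p.1 = -1 := hp.1.resolve_left hp1
          have hq1 : q.1 ≠ 1 := fun hh => hp1 (u1.mpr hh)
          have hq1' : q.1 = -1 := hq.1.resolve_left hq1
          rw [hp1', hq1']
      exact Prod.ext e1 e2
    · obtain ⟨u, w⟩ := entry_bound h1.1 p hp
      exact ⟨u, w.trans h1.2⟩
    · obtain ⟨u, w⟩ := entry_bound h2.1 p hp
      exact ⟨u, w.trans h2.2⟩

lemma WL_finite (m : ℕ) : (WL m).Finite :=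
  (VL_finite m).subset fun _ h => ⟨h.1.1, h.2⟩

lemma ZL_finite (s : ℕ) : (ZL s).Finite :=
  (VL_finite s).subset fun _ h => ⟨h.1.1, le_of_eq h.2⟩

lemma CL_finite (s : ℕ) : (CL s).Finite :=
  (VL_finite s).subset fun _ h => ⟨h.1, le_of_eq h.2⟩

lemma HE_finite (b s : ℕ) : (HE b s).Finite :=
  (VL_finite s).subset fun _ h => ⟨h.1.1, le_of_eq h.2.1⟩

lemma HS_finite (b s : ℕ) : (HS b s).Finite :=
  (VL_finite s).subset fun _ h => ⟨h.1.1, le_of_eq h.2.1⟩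

lemma Ycard_eq (n : ℕ) : Ycard n = (WL (n + 1)).ncard := by
  rw [Ycard, Yset_eq, Set.ncard_image_of_injOn]
  intro L hL L' hL' h
  exact eval_injective L L' hL.1.1 hL'.1.1 h

lemma WL_split (m : ℕ) : WL (m + 1) = WL m ∪ ZL (m + 1) := by
  ext L
  simp only [WL, ZL, Set.mem_setOf_eq, Set.mem_union]
  constructor
  · rintro ⟨h1, h2⟩
    rcases Nat.lt_or_ge (qsum L) (m + 1) with h | h
    · exact Or.inl ⟨h1, by omega⟩
    · exact Or.inr ⟨h1, by omega⟩
  · rintro (⟨h1, h2⟩ | ⟨h1, h2⟩) <;> exact ⟨h1, by omega⟩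

lemma Ycard_succ (n : ℕ) : Ycard (n + 1) = Ycard n + (ZL (n + 2)).ncard := by
  rw [Ycard_eq, Ycard_eq, WL_split (n + 1),
    Set.ncard_union_eq ?disj (WL_finite _) (ZL_finite _)]
  case disj =>
    rw [Set.disjoint_left]
    rintro L ⟨_, hL1⟩ ⟨_, hL2⟩
    omega

end Thm11Aux
namespace Thm11Aux

lemma qsum_cons' (e : ℤ) (a : ℕ) (t : List (ℤ × ℕ)) :
    qsum ((e, a) :: t) = a + qsum t := by simp [qsum]

def flipL : List (ℤ × ℕ) → List (ℤ × ℕ)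
  | [] => []
  | (e, a) :: t => (-e, a) :: t

def shift2 : List (ℤ × ℕ) → List (ℤ × ℕ)
  | [] => []
  | (e, a) :: t => (e, a + 2) :: t

lemma fs_cons (a : ℕ) (t : List (ℤ × ℕ)) :
    ∀ (e' : ℤ) (a' : ℕ) t', ((1 : ℤ), a) :: t = (e', a') :: t' → e' = 1 := by
  intro e' a' t' heq
  injection heq with hh _
  injection hh with h3 _
  exact h3.symm

lemma ZL_form {s : ℕ} (hs : 1 ≤ s) {L : List (ℤ × ℕ)} (h : L ∈ ZL s) :
    ∃ a t, L = ((1 : ℤ), a) :: t ∧ Odd a ∧ 0 < a := by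
  obtain ⟨⟨hv, hfs⟩, hq⟩ := h
  cases L with
  | nil => rw [qsum_nil] at hq; omega
  | cons p t =>
    obtain ⟨e, a⟩ := p
    have he : e = 1 := hfs e a t rfl
    subst he
    exact ⟨a, t, rfl, (valid_head hv).2.1, (valid_head hv).2.2⟩

lemma ZL_split_head {s : ℕ} (hs : 1 ≤ s) : ZL s = HE 1 s ∪ HS 3 s := by
  ext L
  constructor
  · intro h
    obtain ⟨a, t, rfl, hodd, hpos⟩ := ZL_form hs h
    rw [Nat.odd_iff] at hodd
    rcases (by omega : a = 1 ∨ 3 ≤ a) with rfl | h3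
    · exact Or.inl ⟨h.1, h.2, t, rfl⟩
    · exact Or.inr ⟨h.1, h.2, a, t, h3, rfl⟩
  · rintro (⟨h1, h2, _⟩ | ⟨h1, h2, _⟩) <;> exact ⟨h1, h2⟩

lemma HS3_split (s : ℕ) : HS 3 s = HE 3 s ∪ HS 5 s := by
  ext L
  constructor
  · rintro ⟨h1, h2, a, t, h3, rfl⟩
    have hodd : Odd a := (valid_head h1.1).2.1
    rw [Nat.odd_iff] at hodd
    rcases (by omega : a = 3 ∨ 5 ≤ a) with rfl | h5
    · exact Or.inl ⟨h1, h2, t, rfl⟩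
    · exact Or.inr ⟨h1, h2, a, t, h5, rfl⟩
  · rintro (⟨h1, h2, t, rfl⟩ | ⟨h1, h2, a, t, h5, rfl⟩)
    · exact ⟨h1, h2, 3, t, le_refl 3, rfl⟩
    · exact ⟨h1, h2, a, t, by omega, rfl⟩

lemma HE1_HS3_disj (s : ℕ) : Disjoint (HE 1 s) (HS 3 s) := by
  rw [Set.disjoint_left]
  rintro L ⟨_, _, t, rfl⟩ ⟨_, _, a, t', h3, heq⟩
  injection heq with h1 _
  injection h1 with _ h2
  omega

lemma HE3_HS5_disj (s : ℕ) : Disjoint (HE 3 s) (HS 5 s) := by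
  rw [Set.disjoint_left]
  rintro L ⟨_, _, t, rfl⟩ ⟨_, _, a, t', h5, heq⟩
  injection heq with h1 _
  injection h1 with _ h2
  omega

lemma HE1_eq (k : ℕ) : HE 1 (k + 2) = (fun L => ((1 : ℤ), 1) :: L) '' ZL (k + 1) := by
  ext L
  constructor
  · rintro ⟨⟨hv, hfs⟩, hq, t, rfl⟩
    refine ⟨t, ⟨⟨valid_tail hv, ?_⟩, ?_⟩, rfl⟩
    · intro e a t' heq
      subst heq
      have h2 := valid_cons_cons hv
      rcases (valid_head (valid_tail hv)).1 with h | h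
      · exact h
      · omega
    · rw [qsum_cons'] at hq; omega
  · rintro ⟨t, ⟨⟨hv, hfs⟩, hq⟩, rfl⟩
    have hne : t ≠ [] := by
      intro h; subst h; rw [qsum_nil] at hq; omega
    cases t with
    | nil => exact absurd rfl hne
    | cons p t' =>
      obtain ⟨e, a⟩ := p
      have he : e = 1 := hfs e a t' rfl
      subst he
      refine ⟨⟨valid_cons' (Or.inl rfl) odd_one one_pos (by norm_num) hv, fs_cons _ _⟩,
        ?_, (((1 : ℤ), a) :: t'), rfl⟩
      rw [qsum_cons', qsum_cons']
      rw [qsum_cons'] at hq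
      omega

lemma HE3_eq (k : ℕ) : HE 3 (k + 4) = (fun L => ((1 : ℤ), 3) :: L) '' CL (k + 1) := by
  ext L
  constructor
  · rintro ⟨⟨hv, _⟩, hq, t, rfl⟩
    refine ⟨t, ⟨valid_tail hv, ?_⟩, rfl⟩
    rw [qsum_cons'] at hq; omega
  · rintro ⟨t, ⟨hv, hq⟩, rfl⟩
    have hne : t ≠ [] := by
      intro h; subst h; rw [qsum_nil] at hq; omega
    cases t with
    | nil => exact absurd rfl hne
    | cons p t' =>
      obtain ⟨e, a⟩ := p
      have he := (valid_head hv).1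
      refine ⟨⟨valid_cons' (Or.inl rfl) (by decide) (by norm_num) ?_ hv, fs_cons _ _⟩,
        ?_, ((e, a) :: t'), rfl⟩
      · rcases he with rfl | rfl <;> norm_num
      · rw [qsum_cons', qsum_cons']
        rw [qsum_cons'] at hq
        omega

lemma HS5_eq (k : ℕ) : HS 5 (k + 2) = shift2 '' HS 3 k := by
  ext L
  constructor
  · rintro ⟨⟨hv, _⟩, hq, a, t, h5, rfl⟩
    have hodd : Odd a := (valid_head hv).2.1
    rw [Nat.odd_iff] at hodd
    rw [qsum_cons'] at hq
    refine ⟨((1 : ℤ), a - 2) :: t, ⟨⟨?_, fs_cons _ _⟩, ?_, a - 2, t, by omega, rfl⟩, ?_⟩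
    · cases t with
      | nil =>
        exact valid_single' (Or.inl rfl) (by rw [Nat.odd_iff]; omega) (by omega)
          (fun h => absurd h (by omega))
      | cons p t'' =>
        obtain ⟨e', a'⟩ := p
        have he' := (valid_head (valid_tail hv)).1
        refine valid_cons' (Or.inl rfl) (by rw [Nat.odd_iff]; omega) (by omega) ?_
          (valid_tail hv)
        rcases he' with rfl | rfl <;> push_cast <;> omega
    · rw [qsum_cons']; omega
    · have hs2 : shift2 (((1 : ℤ), a - 2) :: t) = ((1 : ℤ), a - 2 + 2) :: t := rfl
      rw [hs2, (by omega : a - 2 + 2 = a)]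
  · rintro ⟨M, ⟨⟨hv, _⟩, hq, b, t, h3, rfl⟩, rfl⟩
    have hs2 : shift2 (((1 : ℤ), b) :: t) = ((1 : ℤ), b + 2) :: t := rfl
    rw [hs2]
    have hodd : Odd b := (valid_head hv).2.1
    rw [Nat.odd_iff] at hodd
    rw [qsum_cons'] at hq
    refine ⟨⟨?_, fs_cons _ _⟩, ?_, b + 2, t, by omega, rfl⟩
    · cases t with
      | nil =>
        exact valid_single' (Or.inl rfl) (by rw [Nat.odd_iff]; omega) (by omega)
          (fun h => absurd h (by omega))
      | cons p t'' =>
        obtain ⟨e', a'⟩ := p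
        have he' := (valid_head (valid_tail hv)).1
        refine valid_cons' (Or.inl rfl) (by rw [Nat.odd_iff]; omega) (by omega) ?_
          (valid_tail hv)
        rcases he' with rfl | rfl <;> push_cast <;> omega
    · rw [qsum_cons']; omega

lemma CL_eq (k : ℕ) : CL (k + 2) = ZL (k + 2) ∪ flipL '' ZL (k + 2) := by
  ext L
  constructor
  · rintro ⟨hv, hq⟩
    cases L with
    | nil => rw [qsum_nil] at hq; omega
    | cons p t =>
      obtain ⟨e, a⟩ := p
      rcases (valid_head hv).1 with rfl | rfl
      · exact Or.inl ⟨⟨hv, fs_cons _ _⟩, hq⟩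
      · refine Or.inr ⟨((1 : ℤ), a) :: t, ⟨⟨?_, fs_cons _ _⟩, ?_⟩, rfl⟩
        · cases t with
          | nil =>
            exact valid_single' (Or.inl rfl) (valid_head hv).2.1 (valid_head hv).2.2
              (fun _ => rfl)
          | cons p' t' =>
            obtain ⟨e', a'⟩ := p'
            exact valid_cons' (Or.inl rfl) (valid_head hv).2.1 (valid_head hv).2.2
              (valid_cons_cons hv) (valid_tail hv)
        · rw [qsum_cons'] at hq ⊢; exact hq
  · rintro (⟨⟨hv, _⟩, hq⟩ | ⟨M, hM, rfl⟩)
    · exact ⟨hv, hq⟩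
    · obtain ⟨a, t, rfl, hodd, hpos⟩ := ZL_form (by omega) hM
      obtain ⟨⟨hv, _⟩, hq⟩ := hM
      have hflip : flipL (((1 : ℤ), a) :: t) = ((-1 : ℤ), a) :: t := rfl
      rw [hflip]
      refine ⟨?_, by rw [qsum_cons'] at hq ⊢; exact hq⟩
      cases t with
      | nil =>
        have ha : a = k + 2 := by rw [qsum_cons', qsum_nil] at hq; omega
        exact valid_single' (Or.inr rfl) hodd hpos (fun h1 => by omega)
      | cons p' t' =>
        obtain ⟨e', a'⟩ := p'
        exact valid_cons' (Or.inr rfl) hodd hpos (valid_cons_cons hv) (valid_tail hv)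

lemma CL_disj (k : ℕ) : Disjoint (ZL (k + 2)) (flipL '' ZL (k + 2)) := by
  rw [Set.disjoint_left]
  rintro L ⟨⟨_, hfs⟩, _⟩ ⟨M, hM, rfl⟩
  obtain ⟨a, t, rfl, _, _⟩ := ZL_form (by omega) hM
  have hflip : flipL (((1 : ℤ), a) :: t) = ((-1 : ℤ), a) :: t := rfl
  have := hfs (-1) a t hflip
  norm_num at this

lemma flip_injOn (k : ℕ) : Set.InjOn flipL (ZL (k + 2)) := by
  intro L hL M hM h
  obtain ⟨a, t, rfl, _, _⟩ := ZL_form (by omega) hL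
  obtain ⟨b, u, rfl, _, _⟩ := ZL_form (by omega) hM
  have h' : ((-1 : ℤ), a) :: t = ((-1 : ℤ), b) :: u := h
  injection h' with h1 h2
  injection h1 with _ h3
  rw [h3, h2]

lemma shift2_injOn (k : ℕ) : Set.InjOn shift2 (HS 3 k) := by
  rintro L hL M hM h
  obtain ⟨_, _, a, t, _, rfl⟩ := hL
  obtain ⟨_, _, b, u, _, rfl⟩ := hM
  have h' : ((1 : ℤ), a + 2) :: t = ((1 : ℤ), b + 2) :: u := h
  injection h' with h1 h2
  injection h1 with _ h3
  have hab : a = b := by omega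
  rw [hab, h2]

lemma card_HE1 (k : ℕ) : (HE 1 (k + 2)).ncard = (ZL (k + 1)).ncard := by
  rw [HE1_eq, Set.ncard_image_of_injOn (fun a _ b _ h => by simpa using h)]

lemma card_HE3 (k : ℕ) : (HE 3 (k + 4)).ncard = (CL (k + 1)).ncard := by
  rw [HE3_eq, Set.ncard_image_of_injOn (fun a _ b _ h => by simpa using h)]

lemma card_HS5 (k : ℕ) : (HS 5 (k + 2)).ncard = (HS 3 k).ncard := by
  rw [HS5_eq, Set.ncard_image_of_injOn (shift2_injOn k)]

lemma card_CL (k : ℕ) : (CL (k + 2)).ncard = 2 * (ZL (k + 2)).ncard := by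
  rw [CL_eq, Set.ncard_union_eq (CL_disj k) (ZL_finite _) ((ZL_finite _).image _),
    Set.ncard_image_of_injOn (flip_injOn k)]
  ring

lemma card_ZL_split (s : ℕ) (hs : 1 ≤ s) :
    (ZL s).ncard = (HE 1 s).ncard + (HS 3 s).ncard := by
  rw [ZL_split_head hs, Set.ncard_union_eq (HE1_HS3_disj s) (HE_finite _ _) (HS_finite _ _)]

lemma card_HS3_split (s : ℕ) :
    (HS 3 s).ncard = (HE 3 s).ncard + (HS 5 s).ncard := by
  rw [HS3_split s, Set.ncard_union_eq (HE3_HS5_disj s) (HE_finite _ _) (HS_finite _ _)]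

lemma ZL_rec (k : ℕ) :
    (ZL (k + 6)).ncard = (ZL (k + 5)).ncard + (ZL (k + 4)).ncard + (ZL (k + 3)).ncard := by
  have e1 := card_ZL_split (k + 6) (by omega)
  have e2 := card_HS3_split (k + 6)
  have e3 : (HE 1 (k + 6)).ncard = (ZL (k + 5)).ncard := by
    have h := card_HE1 (k + 4)
    rw [(by omega : k + 4 + 2 = k + 6), (by omega : k + 4 + 1 = k + 5)] at h
    exact h
  have e4 : (HE 3 (k + 6)).ncard = (CL (k + 3)).ncard := by
    have h := card_HE3 (k + 2)
    rw [(by omega : k + 2 + 4 = k + 6), (by omega : k + 2 + 1 = k + 3)] at h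
    exact h
  have e5 : (HS 5 (k + 6)).ncard = (HS 3 (k + 4)).ncard := by
    have h := card_HS5 (k + 4)
    rw [(by omega : k + 4 + 2 = k + 6)] at h
    exact h
  have e6 : (CL (k + 3)).ncard = 2 * (ZL (k + 3)).ncard := by
    have h := card_CL (k + 1)
    rw [(by omega : k + 1 + 2 = k + 3)] at h
    exact h
  have e7 := card_ZL_split (k + 4) (by omega)
  have e8 : (HE 1 (k + 4)).ncard = (ZL (k + 3)).ncard := by
    have h := card_HE1 (k + 2)
    rw [(by omega : k + 2 + 2 = k + 4), (by omega : k + 2 + 1 = k + 3)] at h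
    exact h
  omega

end Thm11Aux

/-- With `Z_n = Y_{n+1} − Y_n − 1`, for all `n ≥ 1` one has
`Z_{n+3} = Z_{n+2} + Z_{n+1} + Z_n + 2`. -/
theorem thm11 (n : ℕ) (hn : 1 ≤ n) :
    Zcard (n + 3) = Zcard (n + 2) + Zcard (n + 1) + Zcard n + 2 := by
  obtain ⟨k, rfl⟩ : ∃ k, n = k + 1 := ⟨n - 1, by omega⟩
  have hZ : ∀ m : ℕ, Zcard m = ((Thm11Aux.ZL (m + 2)).ncard : ℤ) - 1 := by
    intro m
    rw [Zcard, Thm11Aux.Ycard_succ m]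
    push_cast
    ring
  have hrec := Thm11Aux.ZL_rec k
  rw [hZ, hZ, hZ, hZ]
  rw [(by omega : k + 1 + 3 + 2 = k + 6), (by omega : k + 1 + 2 + 2 = k + 5),
    (by omega : k + 1 + 1 + 2 = k + 4), (by omega : k + 1 + 2 = k + 3)]
  omega

end
end

section
/- Let λ be the unique real root of λ³ − λ² − λ − 1 = 0 and Z_n = Y_{n+1} − Y_n − 1. Then lim_{n→∞} Y_n / Y_{n+1} = 1/λ, lim_{n→∞} Z_n / Z_{n+1} = 1/λ, and lim_{n→∞} Y_n / Z_n = 1/(λ − 1). -/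
open Filter Topology

noncomputable section

namespace OCF

lemma valid_head {e : ℤ} {a : ℕ} {t : List (ℤ × ℕ)} (h : ocfValid ((e,a) :: t)) :
    (e = 1 ∨ e = -1) ∧ Odd a ∧ 0 < a := by
  cases t with
  | nil => exact ⟨h.1, h.2.1, h.2.2.1⟩
  | cons p s => obtain ⟨p1, p2⟩ := p; exact ⟨h.1, h.2.1, h.2.2.1⟩

lemma valid_tail {e : ℤ} {a : ℕ} {t : List (ℤ × ℕ)} (h : ocfValid ((e,a) :: t)) :
    ocfValid t := by
  cases t with
  | nil => trivial
  | cons p s => obtain ⟨p1, p2⟩ := p; exact h.2.2.2.2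

lemma valid_coupling {e e' : ℤ} {a a' : ℕ} {t : List (ℤ × ℕ)}
    (h : ocfValid ((e,a) :: (e',a') :: t)) : 2 ≤ (a : ℤ) + e' := h.2.2.2.1

lemma valid_single_one {e : ℤ} {a : ℕ} (h : ocfValid [(e,a)]) (ha : a = 1) : e = 1 :=
  h.2.2.2 ha

lemma eval_cons (e : ℤ) (a : ℕ) (t : List (ℤ × ℕ)) :
    ocfEval ((e,a) :: t) = (e : ℚ) / ((a : ℚ) + ocfEval t) := rfl

lemma eval_nil : ocfEval [] = 0 := rfl

/-- Main bounds: for a valid nonempty list, `e₁ * eval ∈ (0, 1]` with equality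
only for `[(1,1)]`. -/
lemma eval_bounds_aux : ∀ (n : ℕ) (t : List (ℤ × ℕ)) (e : ℤ) (a : ℕ),
    t.length ≤ n → ocfValid ((e,a) :: t) →
      0 < (e : ℚ) * ocfEval ((e,a) :: t) ∧ (e : ℚ) * ocfEval ((e,a) :: t) ≤ 1 ∧
        ((e : ℚ) * ocfEval ((e,a) :: t) = 1 → (e,a) :: t = [((1:ℤ),(1:ℕ))]) := by
  intro n
  induction n with
  | zero =>
    intro t e a hlen hv
    have ht : t = [] := List.length_eq_zero_iff.mp (Nat.le_zero.mp hlen)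
    subst ht
    obtain ⟨he, hodd, hpos⟩ := valid_head hv
    have hposQ : (1 : ℚ) ≤ (a : ℚ) := by exact_mod_cast hpos
    have hee : (e : ℚ) * (e : ℚ) = 1 := by rcases he with rfl | rfl <;> norm_num
    have heval : (e : ℚ) * ocfEval [(e,a)] = 1 / (a : ℚ) := by
      rw [eval_cons, eval_nil, add_zero, ← mul_div_assoc, hee]
    have haQ : (0:ℚ) < (a:ℚ) := by linarith
    refine ⟨by rw [heval]; positivity, by rw [heval, div_le_one haQ]; exact hposQ, ?_⟩
    rw [heval]
    intro h1
    have : (a : ℚ) = 1 := by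
      field_simp at h1; linarith
    have ha1 : a = 1 := by exact_mod_cast this
    subst ha1
    have := valid_single_one hv rfl
    subst this; rfl
  | succ n ihn =>
    intro t e a hlen hv
    have ih : ∀ (e' : ℤ) (a' : ℕ) (u : List (ℤ × ℕ)), t = (e',a') :: u →
        0 < (e' : ℚ) * ocfEval ((e',a') :: u) ∧ (e' : ℚ) * ocfEval ((e',a') :: u) ≤ 1 ∧
          ((e' : ℚ) * ocfEval ((e',a') :: u) = 1 → (e',a') :: u = [((1:ℤ),(1:ℕ))]) := by
      intro e' a' u htu
      have hvt : ocfValid ((e',a') :: u) := htu ▸ valid_tail hv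
      have : u.length ≤ n := by
        have := hlen; rw [htu] at this; simpa using this
      exact ihn u e' a' this hvt
    obtain ⟨he, hodd, hpos⟩ := valid_head hv
    have hposQ : (1 : ℚ) ≤ (a : ℚ) := by exact_mod_cast hpos
    set w := ocfEval t with hw
    -- key: 1 ≤ a + w, equality only when a = 1 and t = []
    have key : 1 ≤ (a : ℚ) + w ∧ ((a : ℚ) + w = 1 → a = 1 ∧ t = []) := by
      cases t with
      | nil =>
        constructor
        · simpa [hw, eval_nil] using hposQ
        · intro h1
          have : (a : ℚ) = 1 := by simpa [hw, eval_nil] using h1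
          have : a = 1 := by exact_mod_cast this
          exact ⟨this, rfl⟩
      | cons q u =>
        obtain ⟨e', a'⟩ := q
        have hv' : ocfValid ((e',a') :: u) := valid_tail hv
        have hcp : 2 ≤ (a : ℤ) + e' := valid_coupling hv
        obtain ⟨hw0, hw1, hw2⟩ := ih e' a' u rfl
        obtain ⟨he', _, _⟩ := valid_head hv'
        rcases he' with rfl | rfl
        · -- e' = 1 : w > 0
          have : 0 < w := by simpa [hw] using hw0
          constructor
          · linarith
          · intro h; exfalso; linarith
        · -- e' = -1 : w ∈ (-1, 0), a ≥ 3
          have hwn : 0 < -w := by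
            have := hw0; push_cast at this; linarith
          have hwle : -w ≤ 1 := by
            have := hw1; push_cast at this; linarith
          have hwg : -1 < w := by
            rcases lt_or_eq_of_le hwle with h | h
            · linarith
            · exfalso
              have : ((-1 : ℤ) : ℚ) * ocfEval ((-1,a')::u) = 1 := by
                push_cast; rw [← hw]; linarith
              have := hw2 this
              simp at this
          have ha3 : (3 : ℚ) ≤ (a : ℚ) := by
            have : (3 : ℤ) ≤ (a : ℤ) := by omega
            exact_mod_cast this
          constructor
          · linarith
          · intro h; exfalso; linarith
    have hapw : 0 < (a : ℚ) + w := lt_of_lt_of_le one_pos key.1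
    have hee : (e : ℚ) * (e : ℚ) = 1 := by
      rcases he with rfl | rfl <;> norm_num
    have heval : (e : ℚ) * ocfEval ((e,a) :: t) = 1 / ((a : ℚ) + w) := by
      rw [eval_cons, ← hw, ← mul_div_assoc, hee]
    refine ⟨?_, ?_, ?_⟩
    · rw [heval]; positivity
    · rw [heval]; rw [div_le_one hapw]; exact key.1
    · rw [heval]
      intro h1
      have hne : (a : ℚ) + w ≠ 0 := ne_of_gt hapw
      have : (a : ℚ) + w = 1 := by
        field_simp at h1; linarith
      obtain ⟨ha1, ht⟩ := key.2 this
      subst ha1; subst ht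
      have := valid_single_one hv rfl
      subst this; rfl

/-- Range of the evaluation of any valid list: `(-1, 1]`, with value `1` only
for `[(1,1)]`, and `0` only for `[]`. -/
lemma eval_range {t : List (ℤ × ℕ)} (h : ocfValid t) :
    (-1 : ℚ) < ocfEval t ∧ ocfEval t ≤ 1 ∧
      (ocfEval t = 1 → t = [((1:ℤ),(1:ℕ))]) ∧ (ocfEval t = 0 → t = []) := by
  cases t with
  | nil => norm_num [eval_nil]
  | cons p s =>
    obtain ⟨e, a⟩ := p
    obtain ⟨h0, h1, h2⟩ := eval_bounds_aux s.length s e a le_rfl h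
    obtain ⟨he, _, _⟩ := valid_head h
    rcases he with rfl | rfl
    · push_cast at h0 h1 h2
      refine ⟨by linarith, by linarith, ?_, ?_⟩
      · intro hh; exact h2 (by rw [hh]; norm_num)
      · intro hh; exfalso; rw [hh] at h0; norm_num at h0
    · push_cast at h0 h1 h2
      refine ⟨?_, by linarith, ?_, ?_⟩
      · by_contra hc
        push_neg at hc
        rcases lt_or_eq_of_le hc with hlt | heq
        · linarith
        · have := h2 (by rw [heq]; norm_num)
          simp at this
      · intro hh; exfalso; linarith
      · intro hh; exfalso; rw [hh] at h0; norm_num at h0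

lemma eval_ne_zero {e : ℤ} {a : ℕ} {t : List (ℤ × ℕ)} (h : ocfValid ((e,a) :: t)) :
    ocfEval ((e,a) :: t) ≠ 0 := by
  intro hc
  have := (eval_range h).2.2.2 hc
  simp at this

/-- The denominator `a + eval tail` of a valid list is at least 1. -/
lemma denom_ge_one {e : ℤ} {a : ℕ} {t : List (ℤ × ℕ)} (h : ocfValid ((e,a) :: t)) :
    1 ≤ (a : ℚ) + ocfEval t := by
  obtain ⟨he, hodd, hpos⟩ := valid_head h
  have hposQ : (1 : ℚ) ≤ (a : ℚ) := by exact_mod_cast hpos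
  cases t with
  | nil => simpa [eval_nil] using hposQ
  | cons q u =>
    obtain ⟨e', a'⟩ := q
    have hv' : ocfValid ((e',a') :: u) := valid_tail h
    have hcp : 2 ≤ (a : ℤ) + e' := valid_coupling h
    obtain ⟨hw0, _, _⟩ := eval_bounds_aux u.length u e' a' le_rfl hv'
    obtain ⟨hra, _, _, _⟩ := eval_range hv'
    obtain ⟨he', _, _⟩ := valid_head hv'
    rcases he' with rfl | rfl
    · have : 0 < ocfEval ((1,a') :: u) := by
        have := hw0; push_cast at this; linarith
      linarith
    · have ha3 : (3 : ℚ) ≤ (a : ℚ) := by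
        have : (3 : ℤ) ≤ (a : ℤ) := by omega
        exact_mod_cast this
      linarith

/-- Uniqueness: evaluation is injective on valid lists. -/
lemma eval_inj : ∀ (L M : List (ℤ × ℕ)), ocfValid L → ocfValid M →
    ocfEval L = ocfEval M → L = M := by
  intro L
  induction L with
  | nil =>
    intro M _ hM hEq
    cases M with
    | nil => rfl
    | cons p s =>
      obtain ⟨f, b⟩ := p
      exact absurd (by rw [← hEq]; rfl) (Ne.symm (eval_ne_zero hM))
  | cons p t ih =>
    intro M hL hM hEq
    obtain ⟨e, a⟩ := p
    cases M with
    | nil => exact absurd (by rw [hEq]; rfl) (eval_ne_zero hL)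
    | cons q s =>
      obtain ⟨f, b⟩ := q
      obtain ⟨heL0, _, _⟩ := eval_bounds_aux t.length t e a le_rfl hL
      obtain ⟨heM0, _, _⟩ := eval_bounds_aux s.length s f b le_rfl hM
      obtain ⟨he, hodda, hposa⟩ := valid_head hL
      obtain ⟨hf, hoddb, hposb⟩ := valid_head hM
      rw [← hEq] at heM0
      have hef : e = f := by
        rcases he with rfl | rfl <;> rcases hf with rfl | rfl <;>
          first
          | rfl
          | (exfalso; push_cast at heL0 heM0; nlinarith)
      subst hef
      have htv : ocfValid t := valid_tail hL
      have hsv : ocfValid s := valid_tail hM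
      have hA : 0 < (a : ℚ) + ocfEval t := lt_of_lt_of_le one_pos (denom_ge_one hL)
      have hB : 0 < (b : ℚ) + ocfEval s := lt_of_lt_of_le one_pos (denom_ge_one hM)
      have hee : (e : ℚ) * (e : ℚ) = 1 := by
        rcases he with rfl | rfl <;> norm_num
    -- 1/A = 1/B
      have hinv : ((a : ℚ) + ocfEval t)⁻¹ = ((b : ℚ) + ocfEval s)⁻¹ := by
        have h1 : (e : ℚ) * ocfEval ((e,a) :: t) = ((a : ℚ) + ocfEval t)⁻¹ := by
          rw [eval_cons, ← mul_div_assoc, hee, one_div]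
        have h2 : (e : ℚ) * ocfEval ((e,b) :: s) = ((b : ℚ) + ocfEval s)⁻¹ := by
          rw [eval_cons, ← mul_div_assoc, hee, one_div]
        rw [← h1, ← h2, hEq]
      have hd : (a : ℚ) + ocfEval t = (b : ℚ) + ocfEval s := inv_injective hinv
      obtain ⟨hwl, hwu, hw1, _⟩ := eval_range htv
      obtain ⟨hwl', hwu', hw1', _⟩ := eval_range hsv
      have hab : a = b := by
        have h2 : ((a : ℤ) - b : ℤ) < 2 := by
          have : ((a:ℤ) : ℚ) - ((b:ℤ) : ℚ) < 2 := by push_cast; linarith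
          exact_mod_cast this
        have h3 : (-2 : ℤ) < (a : ℤ) - b := by
          have : (-2 : ℚ) < ((a:ℤ) : ℚ) - ((b:ℤ) : ℚ) := by push_cast; linarith
          exact_mod_cast this
        obtain ⟨k, hk⟩ := hodda
        obtain ⟨j, hj⟩ := hoddb
        omega
      subst hab
      have hww : ocfEval t = ocfEval s := by
        have : ((a : ℕ) : ℚ) + ocfEval t = ((a : ℕ) : ℚ) + ocfEval s := hd
        linarith
      rw [ih s htv hsv hww]

end OCF

namespace OCF

lemma flip_valid {a : ℕ} {t : List (ℤ × ℕ)} (h : ocfValid (((1:ℤ),a) :: t))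
    (hne : ¬(a = 1 ∧ t = [])) : ocfValid (((-1:ℤ),a) :: t) := by
  cases t with
  | nil =>
    exact ⟨Or.inr rfl, h.2.1, h.2.2.1, fun h1 => absurd ⟨h1, rfl⟩ hne⟩
  | cons q u =>
    obtain ⟨e', a'⟩ := q
    exact ⟨Or.inr rfl, h.2.1, h.2.2.1, h.2.2.2.1, h.2.2.2.2⟩

lemma flip_eval (a : ℕ) (t : List (ℤ × ℕ)) :
    ocfEval (((-1:ℤ),a) :: t) = - ocfEval (((1:ℤ),a) :: t) := by
  rw [eval_cons, eval_cons]; push_cast; ring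

lemma toNatCastQ {m : ℤ} (h : 0 ≤ m) : ((m.toNat : ℕ) : ℚ) = (m : ℚ) := by
  rw [← Int.cast_natCast, Int.toNat_of_nonneg h]

/-- Existence: every rational in `(0,1]` has a valid odd continued fraction
expansion with leading sign `+1`. -/
lemma exists_rep : ∀ (n : ℕ) (x : ℚ), x.den = n → 0 < x → x ≤ 1 →
    ∃ a t, ocfValid (((1:ℤ),a) :: t) ∧ ocfEval (((1:ℤ),a) :: t) = x := by
  intro n
  induction n using Nat.strong_induction_on with
  | _ n ihn =>
    intro x hden hx0 hx1
    rcases eq_or_lt_of_le hx1 with rfl | hx1'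
    · refine ⟨1, [], ⟨Or.inl rfl, odd_one, one_pos, fun _ => rfl⟩, ?_⟩
      rw [eval_cons, eval_nil]; norm_num
    -- 0 < x < 1
    set y := x⁻¹ with hy
    have hy1 : 1 < y := (one_lt_inv₀ hx0).mpr hx1'
    have hy0 : 0 < y := lt_trans one_pos hy1
    have hxy : x = y⁻¹ := (inv_inv x).symm
    set k : ℤ := ⌊y⌋ with hkdef
    have hk1 : 1 ≤ k := by
      rw [hkdef, Int.le_floor]; exact_mod_cast hy1.le
    have hky : (k : ℚ) ≤ y := Int.floor_le y
    have hyk : y < (k : ℚ) + 1 := Int.lt_floor_add_one y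
    have hnum_pos : 0 < x.num := Rat.num_pos.mpr hx0
    have hnum_lt : x.num < (x.den : ℤ) := by
      have h1 : (x.num : ℚ) < (x.den : ℚ) := by
        have := hx1'
        rw [← Rat.num_div_den x, div_lt_one (by exact_mod_cast x.pos)] at this
        exact this
      exact_mod_cast h1
    have hyden : (y.den : ℤ) ∣ x.num := by
      rw [hy, Rat.inv_def]; exact Rat.den_dvd _ _
    have hshift : ∀ c : ℤ, ((y - (c:ℚ)).den : ℤ) ∣ x.num := by
      intro c
      refine dvd_trans ?_ hyden
      have h := Rat.add_den_dvd y ((-c : ℤ) : ℚ)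
      rw [Rat.den_intCast, mul_one] at h
      rw [show y - (c:ℚ) = y + ((-c : ℤ) : ℚ) by push_cast; ring]
      exact_mod_cast h
    have hsmall : ∀ w : ℚ, ((w.den : ℤ) ∣ x.num) → w.den < n := by
      intro w hdvd
      have h1 : (w.den : ℤ) ≤ x.num := Int.le_of_dvd hnum_pos hdvd
      have h2 : (w.den : ℤ) < (x.den : ℤ) := lt_of_le_of_lt h1 hnum_lt
      rw [← hden]
      exact_mod_cast h2
    by_cases hint : (k : ℚ) = y
    · -- x = 1/k , k ≥ 2
      have hk2 : 2 ≤ k := by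
        by_contra hc
        push_neg at hc
        have hk1' : k = 1 := by omega
        rw [hk1'] at hint
        rw [← hint] at hy1
        norm_num at hy1
      have hk0 : ((k:ℤ):ℚ) ≠ 0 := by
        apply ne_of_gt; exact_mod_cast (by omega : (0:ℤ) < k)
      rcases Int.even_or_odd k with hev | hod
      · -- k even : x = 1/((k-1) + 1/1)
        have hAQ : (((k-1).toNat : ℕ) : ℚ) = (k : ℚ) - 1 := by
          rw [toNatCastQ (by omega : (0:ℤ) ≤ k - 1)]; push_cast; ring
        refine ⟨(k-1).toNat, [((1:ℤ),(1:ℕ))], ?_, ?_⟩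
        · obtain ⟨m, hm⟩ := hev
          exact ⟨Or.inl rfl, ⟨(m-1).toNat, by omega⟩, by omega, by omega,
            ⟨Or.inl rfl, odd_one, one_pos, fun _ => rfl⟩⟩
        · rw [eval_cons, eval_cons, eval_nil, hAQ, hxy, ← hint]
          push_cast
          field_simp
          simp only [add_zero, mul_one, sub_add_cancel]; exact div_self hk0
      · -- k odd : x = 1/k
        have hAQ : ((k.toNat : ℕ) : ℚ) = (k : ℚ) := toNatCastQ (by omega)
        refine ⟨k.toNat, [], ?_, ?_⟩
        · obtain ⟨m, hm⟩ := hod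
          exact ⟨Or.inl rfl, ⟨m.toNat, by omega⟩, by omega, fun _ => rfl⟩
        · rw [eval_cons, eval_nil, add_zero, hAQ, hxy, ← hint]
          push_cast
          rw [one_div]
    · -- k < y
      have hky' : (k : ℚ) < y := lt_of_le_of_ne hky hint
      rcases Int.even_or_odd k with hev | hod
      · -- k even, k ≥ 2 : a = k+1, w = (k+1) - y ∈ (0,1)
        have hk2 : 2 ≤ k := by
          obtain ⟨m, hm⟩ := hev; omega
        set w : ℚ := ((k:ℚ) + 1) - y with hwdef
        have hw0 : 0 < w := by rw [hwdef]; linarith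
        have hw1 : w < 1 := by rw [hwdef]; linarith
        have hwden : w.den < n := by
          apply hsmall
          rw [show w = -(y - ((k+1 : ℤ):ℚ)) by rw [hwdef]; push_cast; ring,
            Rat.den_neg_eq_den]
          exact hshift (k+1)
        obtain ⟨a', t', hval', heval'⟩ := ihn w.den hwden w rfl hw0 hw1.le
        have hne : ¬(a' = 1 ∧ t' = []) := by
          rintro ⟨rfl, rfl⟩
          rw [eval_cons, eval_nil] at heval'
          norm_num at heval'
          have hweq : w = 1 := by linarith [heval'.le, heval'.ge]
          rw [hweq] at hw1
          norm_num at hw1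
        have hvalm := flip_valid hval' hne
        have hAQ : (((k+1).toNat : ℕ) : ℚ) = (k : ℚ) + 1 := by
          rw [toNatCastQ (by omega : (0:ℤ) ≤ k + 1)]; push_cast; ring
        refine ⟨(k+1).toNat, (((-1:ℤ),a') :: t'), ?_, ?_⟩
        · obtain ⟨m, hm⟩ := hev
          exact ⟨Or.inl rfl, ⟨m.toNat, by omega⟩, by omega, by omega, hvalm⟩
        · rw [eval_cons, flip_eval a' t', heval', hAQ]
          rw [show (k:ℚ) + 1 + -w = y by rw [hwdef]; ring]
          rw [hxy]
          push_cast
          rw [one_div]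
      · -- k odd : a = k, w = y - k ∈ (0,1)
        set w : ℚ := y - (k:ℚ) with hwdef
        have hw0 : 0 < w := by rw [hwdef]; linarith
        have hw1 : w < 1 := by rw [hwdef]; linarith
        have hwden : w.den < n := hsmall w (hshift k)
        obtain ⟨a', t', hval', heval'⟩ := ihn w.den hwden w rfl hw0 hw1.le
        have hAQ : ((k.toNat : ℕ) : ℚ) = (k : ℚ) := toNatCastQ (by omega)
        refine ⟨k.toNat, (((1:ℤ),a') :: t'), ?_, ?_⟩
        · obtain ⟨m, hm⟩ := hod
          exact ⟨Or.inl rfl, ⟨m.toNat, by omega⟩, by omega, by omega, hval'⟩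
        · rw [eval_cons, heval', hAQ]
          rw [show (k:ℚ) + w = y by rw [hwdef]; ring]
          rw [hxy]
          push_cast
          rw [one_div]

end OCF

namespace OCF

lemma qsum_nil : qsum [] = 0 := rfl

lemma qsum_cons (e : ℤ) (a : ℕ) (t : List (ℤ × ℕ)) :
    qsum ((e,a) :: t) = a + qsum t := by
  simp [qsum]

lemma qsum_pos {e : ℤ} {a : ℕ} {t : List (ℤ × ℕ)} (h : ocfValid ((e,a) :: t)) :
    1 ≤ qsum ((e,a) :: t) := by
  have := (valid_head h).2.2
  rw [qsum_cons]
  omega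

lemma eq_nil_of_qsum_zero {L : List (ℤ × ℕ)} (h : ocfValid L) (h0 : qsum L = 0) :
    L = [] := by
  cases L with
  | nil => rfl
  | cons p t => obtain ⟨e, a⟩ := p; exact absurd h0 (by have := qsum_pos h; omega)

/-- Valid lists with total partial-quotient sum `m` and positive leading sign. -/
def Sp (m : ℕ) : Set (List (ℤ × ℕ)) :=
  {L | ocfValid L ∧ qsum L = m ∧ ∃ a t, L = ((1:ℤ),a) :: t}

/-- Valid lists with total partial-quotient sum `m` and negative leading sign. -/
def Sm (m : ℕ) : Set (List (ℤ × ℕ)) :=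
  {L | ocfValid L ∧ qsum L = m ∧ ∃ a t, L = ((-1:ℤ),a) :: t}

lemma finite_valid_qsum : ∀ m : ℕ, {L : List (ℤ × ℕ) | ocfValid L ∧ qsum L = m}.Finite := by
  intro m
  induction m using Nat.strong_induction_on with
  | _ m ih =>
    rcases Nat.eq_zero_or_pos m with rfl | hm
    · apply Set.Finite.subset (Set.finite_singleton ([] : List (ℤ × ℕ)))
      intro L hL
      exact eq_nil_of_qsum_zero hL.1 hL.2
    · have hfin : (⋃ a ∈ (Finset.Icc 1 m : Finset ℕ), ⋃ e ∈ ({1,-1} : Finset ℤ),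
          (fun t => (e,a) :: t) '' {t : List (ℤ × ℕ) | ocfValid t ∧ qsum t = m - a}).Finite := by
        apply Set.Finite.biUnion (Finset.Icc 1 m).finite_toSet
        intro a ha
        apply Set.Finite.biUnion ({1,-1} : Finset ℤ).finite_toSet
        intro e _
        have ham : 1 ≤ a := (Finset.mem_Icc.mp ha).1
        exact (ih (m - a) (by omega)).image _
      apply hfin.subset
      rintro L ⟨hval, hq⟩
      cases L with
      | nil => rw [qsum_nil] at hq; omega
      | cons p t =>
        obtain ⟨e, a⟩ := p
        obtain ⟨he, _, hpos⟩ := valid_head hval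
        rw [qsum_cons] at hq
        simp only [Set.mem_iUnion, Set.mem_image, Set.mem_setOf_eq, Finset.coe_insert,
          Finset.coe_singleton, Set.mem_insert_iff, Set.mem_singleton_iff, Finset.mem_coe,
          Finset.mem_Icc, exists_prop]
        exact ⟨a, ⟨by omega, by omega⟩, e, by rcases he with rfl | rfl <;> simp, t, ⟨valid_tail hval, by omega⟩, rfl⟩

lemma Sp_finite (m : ℕ) : (Sp m).Finite :=
  (finite_valid_qsum m).subset (fun L hL => ⟨hL.1, hL.2.1⟩)

lemma Sm_finite (m : ℕ) : (Sm m).Finite :=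
  (finite_valid_qsum m).subset (fun L hL => ⟨hL.1, hL.2.1⟩)

/-- `A m` : the number of valid expansions with sum `m` and leading sign `+`. -/
def AC (m : ℕ) : ℕ := (Sp m).ncard

/-- `B m` : the number of valid expansions with sum `m` and leading sign `-`. -/
def BC (m : ℕ) : ℕ := (Sm m).ncard

/-! ### Head-based decomposition of `Sp m` -/

def H1 (m : ℕ) : Set (List (ℤ × ℕ)) := {L ∈ Sp m | ∃ t, L = ((1:ℤ),(1:ℕ)) :: t}
def H3 (m : ℕ) : Set (List (ℤ × ℕ)) := {L ∈ Sp m | ∃ t, L = ((1:ℤ),(3:ℕ)) :: t}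
def H5 (m : ℕ) : Set (List (ℤ × ℕ)) := {L ∈ Sp m | ∃ a t, L = ((1:ℤ),a) :: t ∧ 5 ≤ a}

lemma Sp_eq_H (m : ℕ) : Sp m = H1 m ∪ H3 m ∪ H5 m := by
  ext L
  constructor
  · intro hL
    obtain ⟨hval, hq, a, t, rfl⟩ := hL
    obtain ⟨_, hodd, hpos⟩ := valid_head hval
    obtain ⟨j, hj⟩ := hodd
    have : a = 1 ∨ a = 3 ∨ 5 ≤ a := by omega
    rcases this with rfl | rfl | h5
    · exact Or.inl (Or.inl ⟨⟨hval, hq, 1, t, rfl⟩, t, rfl⟩)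
    · exact Or.inl (Or.inr ⟨⟨hval, hq, 3, t, rfl⟩, t, rfl⟩)
    · exact Or.inr ⟨⟨hval, hq, a, t, rfl⟩, a, t, rfl, h5⟩
  · rintro ((h | h) | h) <;> exact h.1

lemma head_snd_eq {e f : ℤ} {a b : ℕ} {t s : List (ℤ × ℕ)}
    (h : (e,a) :: t = (f,b) :: s) : a = b :=
  congrArg Prod.snd (List.cons_eq_cons.mp h).1

lemma head_fst_eq {e f : ℤ} {a b : ℕ} {t s : List (ℤ × ℕ)}
    (h : (e,a) :: t = (f,b) :: s) : e = f :=
  congrArg Prod.fst (List.cons_eq_cons.mp h).1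

lemma H1_disj_H3 (m : ℕ) : Disjoint (H1 m) (H3 m) := by
  rw [Set.disjoint_left]
  rintro L ⟨_, t, rfl⟩ ⟨_, s, hs⟩
  have := head_snd_eq hs
  omega

lemma H13_disj_H5 (m : ℕ) : Disjoint (H1 m ∪ H3 m) (H5 m) := by
  rw [Set.disjoint_left]
  rintro L (⟨_, t, rfl⟩ | ⟨_, t, rfl⟩) ⟨_, a, s, hs, h5⟩ <;>
    (have := head_snd_eq hs; omega)

lemma H1_finite (m : ℕ) : (H1 m).Finite := (Sp_finite m).subset (fun L hL => hL.1)
lemma H3_finite (m : ℕ) : (H3 m).Finite := (Sp_finite m).subset (fun L hL => hL.1)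
lemma H5_finite (m : ℕ) : (H5 m).Finite := (Sp_finite m).subset (fun L hL => hL.1)

lemma AC_eq_sum (m : ℕ) :
    AC m = (H1 m).ncard + (H3 m).ncard + (H5 m).ncard := by
  rw [AC, Sp_eq_H m, Set.ncard_union_eq (H13_disj_H5 m) ((H1_finite m).union (H3_finite m))
      (H5_finite m),
    Set.ncard_union_eq (H1_disj_H3 m) (H1_finite m) (H3_finite m)]

lemma H3_empty {m : ℕ} (hm : m < 3) : H3 m = ∅ := by
  ext L
  simp only [Set.mem_empty_iff_false, iff_false]
  rintro ⟨⟨hval, hq, _⟩, t, rfl⟩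
  rw [qsum_cons] at hq
  omega

lemma H5_empty {m : ℕ} (hm : m < 5) : H5 m = ∅ := by
  ext L
  simp only [Set.mem_empty_iff_false, iff_false]
  rintro ⟨⟨hval, hq, _⟩, a, t, rfl, h5⟩
  rw [qsum_cons] at hq
  omega

lemma H1_card {m : ℕ} (hm : 2 ≤ m) : (H1 m).ncard = AC (m - 1) := by
  have himg : H1 m = (fun t => ((1:ℤ),(1:ℕ)) :: t) '' Sp (m - 1) := by
    ext L
    constructor
    · rintro ⟨⟨hval, hq, _⟩, t, rfl⟩
      have htv : ocfValid t := valid_tail hval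
      rw [qsum_cons] at hq
      have ht1 : qsum t = m - 1 := by omega
      have htne : t ≠ [] := by
        intro h
        rw [h, qsum_nil] at ht1
        omega
      obtain ⟨⟨e', a'⟩, u, rfl⟩ := List.exists_cons_of_ne_nil htne
      have hcp : 2 ≤ (1 : ℤ) + e' := valid_coupling hval
      obtain ⟨he', _, _⟩ := valid_head htv
      have he1 : e' = 1 := by rcases he' with rfl | rfl; rfl; omega
      subst he1
      exact ⟨(1,a') :: u, ⟨htv, ht1, a', u, rfl⟩, rfl⟩
    · rintro ⟨t, ⟨htv, htq, a', u, rfl⟩, rfl⟩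
      have hval : ocfValid (((1:ℤ),(1:ℕ)) :: ((1:ℤ),a') :: u) :=
        ⟨Or.inl rfl, odd_one, one_pos, by norm_num, htv⟩
      exact ⟨⟨hval, by rw [qsum_cons]; omega, 1, _, rfl⟩, _, rfl⟩
  rw [himg, Set.ncard_image_of_injective _ (fun x y h => by simpa using h)]
  rfl

lemma Sp_disj_Sm (m k : ℕ) : Disjoint (Sp m) (Sm k) := by
  rw [Set.disjoint_left]
  rintro L ⟨_, _, a, t, rfl⟩ ⟨_, _, b, s, hs⟩
  have := head_fst_eq hs
  norm_num at this

lemma H3_card {m : ℕ} (hm : 4 ≤ m) :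
    (H3 m).ncard = AC (m - 3) + BC (m - 3) := by
  have himg : H3 m = (fun t => ((1:ℤ),(3:ℕ)) :: t) '' (Sp (m - 3) ∪ Sm (m - 3)) := by
    ext L
    constructor
    · rintro ⟨⟨hval, hq, _⟩, t, rfl⟩
      have htv : ocfValid t := valid_tail hval
      rw [qsum_cons] at hq
      have ht1 : qsum t = m - 3 := by omega
      have htne : t ≠ [] := by
        intro h
        rw [h, qsum_nil] at ht1
        omega
      obtain ⟨⟨e', a'⟩, u, rfl⟩ := List.exists_cons_of_ne_nil htne
      obtain ⟨he', _, _⟩ := valid_head htv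
      refine ⟨(e',a') :: u, ?_, rfl⟩
      rcases he' with rfl | rfl
      · exact Or.inl ⟨htv, ht1, a', u, rfl⟩
      · exact Or.inr ⟨htv, ht1, a', u, rfl⟩
    · rintro ⟨t, ht, rfl⟩
      have h3 : m - 3 ≥ 1 := by omega
      rcases ht with ⟨htv, htq, a', u, rfl⟩ | ⟨htv, htq, a', u, rfl⟩ <;>
      · refine ⟨⟨⟨Or.inl rfl, ⟨1, rfl⟩, by norm_num, by norm_num, htv⟩,
          by rw [qsum_cons]; omega, 3, _, rfl⟩, _, rfl⟩
  rw [himg, Set.ncard_image_of_injective _ (fun x y h => by simpa using h),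
    Set.ncard_union_eq (Sp_disj_Sm _ _) (Sp_finite _) (Sm_finite _)]
  rfl

/-- Shift of the leading partial quotient by `+2`. -/
def shift2 : List (ℤ × ℕ) → List (ℤ × ℕ)
  | [] => []
  | (e, a) :: t => (e, a + 2) :: t

lemma H5_card {m : ℕ} (hm : 4 ≤ m) :
    (H5 m).ncard = (H3 (m - 2)).ncard + (H5 (m - 2)).ncard := by
  have himg : H5 m = shift2 '' (H3 (m - 2) ∪ H5 (m - 2)) := by
    ext L
    constructor
    · rintro ⟨⟨hval, hq, _⟩, a, t, rfl, h5⟩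
      have htv : ocfValid t := valid_tail hval
      obtain ⟨_, hodd, _⟩ := valid_head hval
      rw [qsum_cons] at hq
      have hval' : ocfValid (((1:ℤ), a - 2) :: t) := by
        cases t with
        | nil =>
          exact ⟨Or.inl rfl, by obtain ⟨j, hj⟩ := hodd; exact ⟨j - 1, by omega⟩,
            by omega, fun _ => rfl⟩
        | cons q u =>
          obtain ⟨e', a'⟩ := q
          have hcp := valid_coupling hval
          obtain ⟨he', _, _⟩ := valid_head htv
          refine ⟨Or.inl rfl, by obtain ⟨j, hj⟩ := hodd; exact ⟨j - 1, by omega⟩,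
            by omega, by rcases he' with rfl | rfl <;> omega, htv⟩
      have hmem : ((1:ℤ), a - 2) :: t ∈ H3 (m - 2) ∪ H5 (m - 2) := by
        have hsp : ((1:ℤ), a - 2) :: t ∈ Sp (m - 2) :=
          ⟨hval', by rw [qsum_cons]; omega, _, _, rfl⟩
        obtain ⟨j, hj⟩ := hodd
        have : a - 2 = 3 ∨ 5 ≤ a - 2 := by omega
        rcases this with h3 | h5'
        · exact Or.inl ⟨hsp, t, by rw [h3]⟩
        · exact Or.inr ⟨hsp, a - 2, t, rfl, h5'⟩
      refine ⟨_, hmem, ?_⟩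
      rw [shift2]
      have : a - 2 + 2 = a := by obtain ⟨j, hj⟩ := hodd; omega
      rw [this]
    · rintro ⟨M, hM, rfl⟩
      have hMsp : M ∈ Sp (m - 2) := by rcases hM with h | h <;> exact h.1
      have hM3 : ∃ a t, M = ((1:ℤ), a) :: t ∧ 3 ≤ a := by
        rcases hM with ⟨_, t, rfl⟩ | ⟨_, a, t, rfl, h5⟩
        · exact ⟨3, t, rfl, le_refl 3⟩
        · exact ⟨a, t, rfl, by omega⟩
      obtain ⟨a, t, rfl, ha3⟩ := hM3
      obtain ⟨hval, hq, _⟩ := hMsp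
      have htv : ocfValid t := valid_tail hval
      obtain ⟨_, hodd, _⟩ := valid_head hval
      rw [qsum_cons] at hq
      have hval' : ocfValid (((1:ℤ), a + 2) :: t) := by
        cases t with
        | nil =>
          exact ⟨Or.inl rfl, by obtain ⟨j, hj⟩ := hodd; exact ⟨j + 1, by omega⟩,
            by omega, fun h => by omega⟩
        | cons q u =>
          obtain ⟨e', a'⟩ := q
          obtain ⟨he', _, _⟩ := valid_head htv
          refine ⟨Or.inl rfl, by obtain ⟨j, hj⟩ := hodd; exact ⟨j + 1, by omega⟩,
            by omega, by rcases he' with rfl | rfl <;> omega, htv⟩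
      refine ⟨⟨hval', by rw [shift2, qsum_cons]; omega, _, _, by rw [shift2]⟩,
        a + 2, t, by rw [shift2], by omega⟩
  have hinj : Set.InjOn shift2 (H3 (m - 2) ∪ H5 (m - 2)) := by
    rintro L hL M hM h
    have hL' : ∃ a t, L = ((1:ℤ), a) :: t := by
      rcases hL with ⟨_, t, rfl⟩ | ⟨_, a, t, rfl, _⟩; exact ⟨3, t, rfl⟩; exact ⟨a, t, rfl⟩
    have hM' : ∃ b s, M = ((1:ℤ), b) :: s := by
      rcases hM with ⟨_, s, rfl⟩ | ⟨_, b, s, rfl, _⟩; exact ⟨3, s, rfl⟩; exact ⟨b, s, rfl⟩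
    obtain ⟨a, t, rfl⟩ := hL'
    obtain ⟨b, s, rfl⟩ := hM'
    rw [shift2, shift2] at h
    obtain ⟨h1, h2⟩ := List.cons_eq_cons.mp h
    have hab : a = b := by have := congrArg Prod.snd h1; simpa using this
    rw [hab, h2]
  rw [himg, Set.ncard_image_of_injOn hinj,
    Set.ncard_union_eq (Set.disjoint_left.mpr ?_) (H3_finite _) (H5_finite _)]
  rintro L ⟨_, t, rfl⟩ ⟨_, a, s, hs, h5⟩
  have := head_snd_eq hs
  omega

/-- Negate the leading sign. -/
def flipneg : List (ℤ × ℕ) → List (ℤ × ℕ)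
  | [] => []
  | (_, a) :: t => ((-1:ℤ), a) :: t

lemma BC_eq_AC {m : ℕ} (hm : 2 ≤ m) : BC m = AC m := by
  have himg : Sm m = flipneg '' Sp m := by
    ext L
    constructor
    · rintro ⟨hval, hq, a, t, rfl⟩
      have htv : ocfValid t := valid_tail hval
      obtain ⟨_, hodd, hpos⟩ := valid_head hval
      have hval' : ocfValid (((1:ℤ), a) :: t) := by
        cases t with
        | nil => exact ⟨Or.inl rfl, hodd, hpos, fun _ => rfl⟩
        | cons q u =>
          obtain ⟨e', a'⟩ := q
          exact ⟨Or.inl rfl, hodd, hpos, valid_coupling hval, htv⟩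
      exact ⟨((1:ℤ), a) :: t, ⟨hval', hq, _, _, rfl⟩, rfl⟩
    · rintro ⟨M, ⟨hval, hq, a, t, hMt⟩, rfl⟩
      subst hMt
      have htv : ocfValid t := valid_tail hval
      obtain ⟨_, hodd, hpos⟩ := valid_head hval
      have hval' : ocfValid (((-1:ℤ), a) :: t) := by
        cases t with
        | nil =>
          refine ⟨Or.inr rfl, hodd, hpos, fun h1 => ?_⟩
          exfalso
          rw [qsum_cons, qsum_nil, h1] at hq
          omega
        | cons q u =>
          obtain ⟨e', a'⟩ := q
          exact ⟨Or.inr rfl, hodd, hpos, valid_coupling hval, htv⟩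
      exact ⟨hval', by rw [flipneg, ← hq]; rw [qsum_cons, qsum_cons], _, _, rfl⟩
  have hinj : Set.InjOn flipneg (Sp m) := by
    rintro L ⟨_, _, a, t, rfl⟩ M ⟨_, _, b, s, hMs⟩ h
    subst hMs
    rw [flipneg, flipneg] at h
    obtain ⟨h1, h2⟩ := List.cons_eq_cons.mp h
    have hab : a = b := by have := congrArg Prod.snd h1; simpa using this
    rw [hab, h2]
  rw [BC, AC, himg, Set.ncard_image_of_injOn hinj]

lemma BC_one : BC 1 = 0 := by
  have hempty : Sm 1 = ∅ := by
    ext L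
    simp only [Set.mem_empty_iff_false, iff_false]
    rintro ⟨hval, hq, a, t, rfl⟩
    have htv : ocfValid t := valid_tail hval
    obtain ⟨_, _, hpos⟩ := valid_head hval
    rw [qsum_cons] at hq
    have ht0 : qsum t = 0 := by omega
    have ha1 : a = 1 := by omega
    have := eq_nil_of_qsum_zero htv ht0
    subst this; subst ha1
    have := valid_single_one hval rfl
    norm_num at this
  rw [BC, hempty, Set.ncard_empty]

lemma Sp_one : Sp 1 = {[((1:ℤ),(1:ℕ))]} := by
  ext L
  constructor
  · rintro ⟨hval, hq, a, t, rfl⟩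
    obtain ⟨_, _, hpos⟩ := valid_head hval
    rw [qsum_cons] at hq
    have ht0 : qsum t = 0 := by omega
    have ha1 : a = 1 := by omega
    have := eq_nil_of_qsum_zero (valid_tail hval) ht0
    subst this; subst ha1
    rfl
  · rintro rfl
    exact ⟨⟨Or.inl rfl, odd_one, one_pos, fun _ => rfl⟩, rfl, _, _, rfl⟩

lemma AC_one : AC 1 = 1 := by rw [AC, Sp_one, Set.ncard_singleton]

lemma H3_three : H3 3 = {[((1:ℤ),(3:ℕ))]} := by
  ext L
  constructor
  · rintro ⟨⟨hval, hq, _⟩, t, rfl⟩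
    rw [qsum_cons] at hq
    have := eq_nil_of_qsum_zero (valid_tail hval) (by omega)
    rw [this]
    rfl
  · rintro rfl
    exact ⟨⟨⟨Or.inl rfl, ⟨1, rfl⟩, by norm_num, fun h => absurd h (by omega)⟩, rfl, _, _, rfl⟩, _, rfl⟩

lemma AC_two : AC 2 = 1 := by
  rw [AC_eq_sum 2, H1_card (le_refl 2), H3_empty (by omega), H5_empty (by omega)]
  simp [AC_one]

lemma AC_three : AC 3 = 2 := by
  rw [AC_eq_sum 3, H1_card (by omega), H3_three, H5_empty (by omega)]
  simp [AC_two, Set.ncard_singleton]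

lemma AC_four : AC 4 = 3 := by
  rw [AC_eq_sum 4, H1_card (by omega), H3_card (le_refl 4), H5_empty (by omega)]
  norm_num [AC_three, AC_one, BC_one]

lemma AC_rec {m : ℕ} (hm : 5 ≤ m) : AC m = AC (m-1) + AC (m-2) + AC (m-3) := by
  have h1 := AC_eq_sum m
  rw [H1_card (by omega), H3_card (by omega), H5_card (by omega),
    BC_eq_AC (by omega)] at h1
  have h2 := AC_eq_sum (m - 2)
  rw [H1_card (by omega : 2 ≤ m - 2)] at h2
  have h4 : m - 2 - 1 = m - 3 := by omega
  rw [h4] at h2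
  omega

end OCF

namespace OCF

/-- Valid expansions with leading sign `+` (or empty) and sum at most `n+1`. -/
def W (n : ℕ) : Set (List (ℤ × ℕ)) :=
  {L | ocfValid L ∧ qsum L ≤ n + 1 ∧ (L = [] ∨ ∃ a t, L = ((1:ℤ),a) :: t)}

lemma W_finite (n : ℕ) : (W n).Finite := by
  apply Set.Finite.subset
    (Set.Finite.biUnion (Finset.range (n+2)).finite_toSet
      (fun m _ => finite_valid_qsum m))
  rintro L ⟨hval, hq, _⟩
  simp only [Set.mem_iUnion, Finset.mem_coe, Finset.mem_range, exists_prop]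
  exact ⟨qsum L, by omega, hval, rfl⟩

lemma W_zero : W 0 = {[]} ∪ Sp 1 := by
  ext L
  constructor
  · rintro ⟨hval, hq, rfl | ⟨a, t, rfl⟩⟩
    · exact Or.inl rfl
    · have := qsum_pos hval
      exact Or.inr ⟨hval, by omega, a, t, rfl⟩
  · rintro (rfl | ⟨hval, hq, a, t, rfl⟩)
    · exact ⟨trivial, by rw [qsum_nil]; omega, Or.inl rfl⟩
    · exact ⟨hval, by omega, Or.inr ⟨a, t, rfl⟩⟩

lemma W_succ (n : ℕ) : W (n+1) = W n ∪ Sp (n+2) := by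
  ext L
  constructor
  · rintro ⟨hval, hq, hh⟩
    rcases hh with rfl | ⟨a, t, rfl⟩
    · exact Or.inl ⟨trivial, by rw [qsum_nil]; omega, Or.inl rfl⟩
    · rcases Nat.lt_or_ge (qsum ((1,a) :: t)) (n+2) with h | h
      · exact Or.inl ⟨hval, by omega, Or.inr ⟨a, t, rfl⟩⟩
      · exact Or.inr ⟨hval, by omega, a, t, rfl⟩
  · rintro (⟨hval, hq, hh⟩ | ⟨hval, hq, a, t, rfl⟩)
    · exact ⟨hval, by omega, hh⟩
    · exact ⟨hval, by omega, Or.inr ⟨a, t, rfl⟩⟩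

lemma W_disj (n : ℕ) : Disjoint (W n) (Sp (n+2)) := by
  rw [Set.disjoint_left]
  rintro L ⟨_, hq, _⟩ ⟨_, hq', _⟩
  omega

lemma szero_eval {L : List (ℤ × ℕ)} (hval : ocfValid L)
    (hhead : L = [] ∨ ∃ a t, L = ((1:ℤ),a) :: t) :
    Szero (ocfEval L) = qsum L := by
  have hrep : ZeroRep (ocfEval L) L := by
    refine ⟨hval, ?_, rfl⟩
    intro e a t hLt
    rcases hhead with rfl | ⟨a', t', h'⟩
    · exact absurd hLt (by simp)
    · rw [h'] at hLt
      exact (head_fst_eq hLt).symm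
  have hset : {M | ZeroRep (ocfEval L) M} = {L} := by
    apply Set.eq_singleton_iff_unique_mem.mpr
    exact ⟨hrep, fun M hM => eval_inj M L hM.1 hval hM.2.2.symm⟩
  rw [Szero, hset, Set.image_singleton, csInf_singleton]

lemma Yset_eq (n : ℕ) : Yset n = ocfEval '' W n := by
  ext x
  constructor
  · rintro ⟨hx0, hx1, hs⟩
    rcases eq_or_lt_of_le hx0 with heq | hpos
    · exact ⟨[], ⟨trivial, by rw [qsum_nil]; omega, Or.inl rfl⟩, by rw [eval_nil, ← heq]⟩
    · obtain ⟨a, t, hval, heval⟩ := exists_rep x.den x rfl hpos hx1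
      have hsz := szero_eval hval (Or.inr ⟨a, t, rfl⟩)
      rw [heval] at hsz
      exact ⟨_, ⟨hval, by omega, Or.inr ⟨a, t, rfl⟩⟩, heval⟩
  · rintro ⟨L, ⟨hval, hq, hhead⟩, rfl⟩
    have hsz := szero_eval hval hhead
    rcases hhead with rfl | ⟨a, t, rfl⟩
    · refine ⟨by rw [eval_nil], by rw [eval_nil]; norm_num, ?_⟩
      rw [hsz, qsum_nil]
      omega
    · obtain ⟨h0, h1, _⟩ := eval_bounds_aux t.length t 1 a le_rfl hval
      push_cast at h0 h1
      exact ⟨by linarith, by linarith, by rw [hsz]; exact hq⟩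

lemma Ycard_eq (n : ℕ) : Ycard n = (W n).ncard := by
  rw [Ycard, Yset_eq]
  exact Set.ncard_image_of_injOn (fun L hL M hM h => eval_inj L M hL.1 hM.1 h)

lemma Ycard_zero : Ycard 0 = 2 := by
  rw [Ycard_eq, W_zero, Sp_one, Set.singleton_union,
    Set.ncard_insert_of_notMem (by simp) (Set.finite_singleton _),
    Set.ncard_singleton]

lemma Ycard_succ (n : ℕ) : Ycard (n+1) = Ycard n + AC (n+2) := by
  rw [Ycard_eq, Ycard_eq, W_succ,
    Set.ncard_union_eq (W_disj n) (W_finite n) (Sp_finite _)]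
  rfl

lemma AC_ge_one : ∀ m : ℕ, 1 ≤ m → 1 ≤ AC m := by
  intro m
  induction m using Nat.strong_induction_on with
  | _ m ih =>
    intro hm
    rcases Nat.lt_or_ge m 5 with h5 | h5
    · interval_cases m
      · rw [AC_one]
      · rw [AC_two]
      · rw [AC_three]; omega
      · rw [AC_four]; omega
    · rw [AC_rec h5]
      have := ih (m-1) (by omega) (by omega)
      omega

lemma Zcard_eq (n : ℕ) : Zcard n = (AC (n+2) : ℤ) - 1 := by
  rw [Zcard, Ycard_succ]
  push_cast
  ring

lemma Ycard_ge (n : ℕ) : n + 2 ≤ Ycard n := by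
  induction n with
  | zero => rw [Ycard_zero]
  | succ n ih =>
    rw [Ycard_succ]
    have := AC_ge_one (n+2) (by omega)
    omega

/-- The key linear recurrence for `Ycard - 1`. -/
lemma AC_key : ∀ n : ℕ, AC (n+4) + 2 = Ycard (n+1) + Ycard n := by
  intro n
  induction n with
  | zero =>
    rw [AC_four, Ycard_zero, show Ycard 1 = Ycard 0 + AC 2 from Ycard_succ 0,
      Ycard_zero, AC_two]
  | succ n ih =>
    show AC (n+5) + 2 = Ycard (n+2) + Ycard (n+1)
    have h1 := AC_rec (m := n+5) (by omega)
    rw [show n+5-1 = n+4 by omega, show n+5-2 = n+3 by omega,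
      show n+5-3 = n+2 by omega] at h1
    have h2 : Ycard (n+2) = Ycard (n+1) + AC (n+3) := Ycard_succ (n+1)
    have h3 : Ycard (n+1) = Ycard n + AC (n+2) := Ycard_succ n
    omega

lemma Ycard_rec (n : ℕ) : Ycard (n+3) + 2 = Ycard (n+2) + Ycard (n+1) + Ycard n := by
  have h1 : Ycard (n+3) = Ycard (n+2) + AC (n+4) := Ycard_succ (n+2)
  have h2 := AC_key n
  omega

end OCF

namespace OCF

lemma lam_gt_one {lam : ℝ} (h : lam ^ 3 - lam ^ 2 - lam - 1 = 0) : 1 < lam := by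
  nlinarith [sq_nonneg lam, sq_nonneg (lam - 1), sq_nonneg (lam + 1), sq_nonneg (lam ^ 2 - 1)]

lemma lam_lt_two {lam : ℝ} (h : lam ^ 3 - lam ^ 2 - lam - 1 = 0) : lam < 2 := by
  nlinarith [sq_nonneg (lam - 2), sq_nonneg lam, sq_nonneg (lam - 1)]

lemma div_div_aux (X Y r : ℝ) (hr : r ≠ 0) : (X / r) / (Y / r) = X / Y := by
  rcases eq_or_ne Y 0 with rfl | hY
  · simp
  · field_simp

lemma ratio_tendsto {r b d : ℕ → ℝ} {a c β δ : ℝ} (hr : Tendsto r atTop atTop)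
    (hb : Tendsto b atTop (𝓝 β)) (hd : Tendsto d atTop (𝓝 δ)) (hc : c ≠ 0) :
    Tendsto (fun n => (a * r n + b n) / (c * r n + d n)) atTop (𝓝 (a / c)) := by
  have hb0 : Tendsto (fun n => b n / r n) atTop (𝓝 0) := hb.div_atTop hr
  have hd0 : Tendsto (fun n => d n / r n) atTop (𝓝 0) := hd.div_atTop hr
  have h1 : Tendsto (fun n => a + b n / r n) atTop (𝓝 a) := by
    simpa using tendsto_const_nhds.add hb0
  have h2 : Tendsto (fun n => c + d n / r n) atTop (𝓝 c) := by
    simpa using tendsto_const_nhds.add hd0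
  have h3 := h1.div h2 hc
  apply Tendsto.congr' ?_ h3
  filter_upwards [hr.eventually_gt_atTop 0] with n hn
  have hrn : r n ≠ 0 := ne_of_gt hn
  have e1 : (a * r n + b n) / r n = a + b n / r n := by
    rw [add_div, mul_div_cancel_right₀ _ hrn]
  have e2 : (c * r n + d n) / r n = c + d n / r n := by
    rw [add_div, mul_div_cancel_right₀ _ hrn]
  simp only [Pi.div_apply]
  rw [← e1, ← e2, div_div_aux _ _ _ hrn]

lemma quad_bound (lam s u : ℝ) (hlpos : 0 < lam)
    (hprod : lam * (lam - 1)^2 < 2) :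
    u^2 ≤ 2 * (lam * s^2 + lam * (lam-1) * s * u + u^2) := by
  have hA : 0 ≤ lam * (s + (lam-1)/2 * u)^2 := mul_nonneg hlpos.le (sq_nonneg _)
  have hB : 0 ≤ u^2 * (2 - lam * (lam-1)^2) := mul_nonneg (sq_nonneg _) (by linarith)
  nlinarith [hA, hB]

theorem prop5 (lam : ℝ) (hlam : lam ^ 3 - lam ^ 2 - lam - 1 = 0) :
    Tendsto (fun n => (Ycard n : ℝ) / (Ycard (n + 1) : ℝ)) atTop (𝓝 (1 / lam)) ∧
    Tendsto (fun n => (Zcard n : ℝ) / (Zcard (n + 1) : ℝ)) atTop (𝓝 (1 / lam)) ∧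
    Tendsto (fun n => (Ycard n : ℝ) / (Zcard n : ℝ)) atTop (𝓝 (1 / (lam - 1))) := by
  have hl1 : 1 < lam := lam_gt_one hlam
  have hl2 : lam < 2 := lam_lt_two hlam
  have hlpos : 0 < lam := lt_trans one_pos hl1
  have hlam0 : lam ≠ 0 := ne_of_gt hlpos
  have hlam1 : lam - 1 ≠ 0 := ne_of_gt (by linarith)
  set r : ℕ → ℝ := fun n => (Ycard n : ℝ) - 1 with hrdef
  have hrrec : ∀ n, r (n+3) = r (n+2) + r (n+1) + r n := by
    intro n
    have h := Ycard_rec n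
    have h' : ((Ycard (n+3) : ℝ)) + 2
        = (Ycard (n+2) : ℝ) + (Ycard (n+1) : ℝ) + (Ycard n : ℝ) := by
      exact_mod_cast h
    simp only [hrdef]
    linarith
  have hrge : ∀ n : ℕ, ((n : ℕ) : ℝ) + 1 ≤ r n := by
    intro n
    have h := Ycard_ge n
    have h' : ((n : ℝ)) + 2 ≤ (Ycard n : ℝ) := by exact_mod_cast h
    simp only [hrdef]
    linarith
  have hrtop : Tendsto r atTop atTop := by
    apply tendsto_atTop_mono hrge
    exact tendsto_atTop_add_const_right atTop 1 tendsto_natCast_atTop_atTop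
  set v : ℕ → ℝ := fun n => r (n+1) - lam * r n with hvdef
  have hrsucc : ∀ n, r (n+1) = lam * r n + v n := by
    intro n; simp only [hvdef]; ring
  have hvrec : ∀ n, lam * v (n+2) + lam * (lam-1) * v (n+1) + v n = 0 := by
    intro n
    simp only [hvdef]
    linear_combination lam * (hrrec n) - r (n+1) * hlam
  set Q : ℕ → ℝ := fun n =>
    lam * (v (n+1))^2 + lam * (lam-1) * (v (n+1)) * (v n) + (v n)^2 with hQdef
  have hQrec : ∀ n, lam * Q (n+1) = Q n := by
    intro n
    have h := hvrec n
    simp only [hQdef]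
    linear_combination (lam * v (n+2) - v n) * h
  have hQpow : ∀ n, Q n = (lam⁻¹)^n * Q 0 := by
    intro n
    induction n with
    | zero => simp
    | succ n ih =>
      have h : Q (n+1) = lam⁻¹ * Q n := by
        rw [← hQrec n]
        field_simp
      rw [h, ih, pow_succ]
      ring
  have hprod : lam * (lam - 1)^2 < 2 := by nlinarith
  have hQv : ∀ n, (v n)^2 ≤ 2 * Q n := by
    intro n
    simp only [hQdef]
    exact quad_bound lam (v (n+1)) (v n) hlpos hprod
  have hpow0 : Tendsto (fun n : ℕ => 2 * ((lam⁻¹)^n * Q 0)) atTop (𝓝 0) := by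
    have h1 : Tendsto (fun n : ℕ => (lam⁻¹)^n) atTop (𝓝 0) :=
      tendsto_pow_atTop_nhds_zero_of_lt_one (by positivity) (by
        rw [inv_lt_one_iff₀]; right; exact hl1)
    have := (h1.mul_const (Q 0)).const_mul 2
    simpa using this
  have hv2 : Tendsto (fun n => (v n)^2) atTop (𝓝 0) := by
    apply squeeze_zero (fun n => sq_nonneg _) (fun n => ?_) hpow0
    rw [← hQpow n]
    exact hQv n
  have hvabs : Tendsto (fun n => |v n|) atTop (𝓝 0) := by
    have h := (Real.continuous_sqrt.tendsto 0).comp hv2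
    simpa [Function.comp_def, Real.sqrt_sq_eq_abs] using h
  have hv0 : Tendsto v atTop (𝓝 0) := by
    apply tendsto_of_tendsto_of_tendsto_of_le_of_le (g := fun n => -|v n|)
      (h := fun n => |v n|) (by simpa using hvabs.neg) hvabs
      (fun n => neg_abs_le _) (fun n => le_abs_self _)
  have hv1 : Tendsto (fun n => v (n+1)) atTop (𝓝 0) :=
    (tendsto_add_atTop_iff_nat 1).2 hv0
  have hYr : ∀ n, (Ycard n : ℝ) = r n + 1 := by
    intro n; simp only [hrdef]; ring
  have hZr : ∀ n, ((Zcard n : ℤ) : ℝ) = (lam - 1) * r n + (v n - 1) := by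
    intro n
    have h := hrsucc n
    rw [Zcard]
    push_cast
    have e1 : (Ycard (n+1) : ℝ) = r (n+1) + 1 := hYr (n+1)
    rw [e1, hYr n, h]
    ring
  refine ⟨?_, ?_, ?_⟩
  · have hb : Tendsto (fun _ : ℕ => (1:ℝ)) atTop (𝓝 1) := tendsto_const_nhds
    have hd : Tendsto (fun n => v n + 1) atTop (𝓝 1) := by
      simpa using hv0.add_const 1
    have h := ratio_tendsto (a := 1) (c := lam) hrtop hb hd hlam0
    apply Tendsto.congr ?_ h
    intro n
    rw [hYr n, hYr (n+1), hrsucc n]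
    ring_nf
  · have hb : Tendsto (fun n => v n - 1) atTop (𝓝 (-1)) := by
      simpa using hv0.sub_const 1
    have hd : Tendsto (fun n => (lam - 1) * v n + v (n+1) - 1) atTop (𝓝 (-1)) := by
      have := ((hv0.const_mul (lam - 1)).add hv1).sub_const 1
      simpa using this
    have hc : lam * (lam - 1) ≠ 0 := mul_ne_zero hlam0 hlam1
    have h := ratio_tendsto (a := lam - 1) (c := lam * (lam - 1)) hrtop hb hd hc
    have hlim : (lam - 1) / (lam * (lam - 1)) = 1 / lam := by
      field_simp
    rw [hlim] at h
    apply Tendsto.congr ?_ h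
    intro n
    rw [hZr n, hZr (n+1), hrsucc n]
    ring_nf
  · have hb : Tendsto (fun _ : ℕ => (1:ℝ)) atTop (𝓝 1) := tendsto_const_nhds
    have hd : Tendsto (fun n => v n - 1) atTop (𝓝 (-1)) := by
      simpa using hv0.sub_const 1
    have h := ratio_tendsto (a := 1) (c := lam - 1) hrtop hb hd hlam1
    apply Tendsto.congr ?_ h
    intro n
    rw [hYr n, hZr n]
    ring_nf

end OCF

/-- **Proposition 5.** Let `λ` be the unique real root of `λ³ − λ² − λ − 1 = 0` and
`Z_n = Y_{n+1} − Y_n − 1`. Then `lim_{n→∞} Y_n / Y_{n+1} = 1/λ`,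
`lim_{n→∞} Z_n / Z_{n+1} = 1/λ`, and `lim_{n→∞} Y_n / Z_n = 1/(λ − 1)`. -/
theorem thm12 (lam : ℝ) (hlam : lam ^ 3 - lam ^ 2 - lam - 1 = 0) :
    Tendsto (fun n => (Ycard n : ℝ) / (Ycard (n + 1) : ℝ)) atTop (𝓝 (1 / lam)) ∧
    Tendsto (fun n => (Zcard n : ℝ) / (Zcard (n + 1) : ℝ)) atTop (𝓝 (1 / lam)) ∧
    Tendsto (fun n => (Ycard n : ℝ) / (Zcard n : ℝ)) atTop (𝓝 (1 / (lam - 1))) :=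
  OCF.prop5 lam hlam

end
end

section
/- Let ξ = [0; ε₁/a₁, …, ε_l/a_l] be a rational number in (0,1), written as the mediant ξ = x ⊕ y of the two consecutive elements x < y of the Stern–Brocot sequence 𝔉_n between which it first appears, and let ξ^l = x ⊕ ξ and ξ^r = ξ ⊕ y be its two successors. If a_l = 1 then S⁰(ξ^l) − S⁰(ξ) = 1 and S⁰(ξ^r) − S⁰(ξ) = 1 (ξ is a node of the first type); if a_l > 1 then one of S⁰(ξ^l) − S⁰(ξ), S⁰(ξ^r) − S⁰(ξ) equals 1 and the other equals 2 (ξ is a node of the second type). Concretely, if a_l = 1 then {ξ^l, ξ^r} = {[0; ε₁/a₁, …, ε_{l−1}/(a_{l−1}+2)], [0; ε₁/a₁, …, ε_l/a_l, 1/1]}, and if a_l > 1 then {ξ^l, ξ^r} = {[0; ε₁/a₁, …, ε_l/a_l, 1/1], [0; ε₁/a₁, …, ε_l/a_l, −1/1, 1/1]}. -/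
open Filter Topology

noncomputable section

lemma ocfValid_tail {e a t} (h : ocfValid ((e,a) :: t)) : ocfValid t := by
  match t with
  | [] => trivial
  | (e',a') :: t' => exact h.2.2.2.2

lemma ocfValid_head {e : ℤ} {a t} (h : ocfValid ((e,a) :: t)) :
    (e = 1 ∨ e = -1) ∧ Odd a ∧ 0 < a := by
  match t with
  | [] => exact ⟨h.1, h.2.1, h.2.2.1⟩
  | (e',a') :: t' => exact ⟨h.1, h.2.1, h.2.2.1⟩

lemma ocfValid_cons_link {e a e' a' t} (h : ocfValid ((e,a) :: (e',a') :: t)) :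
    2 ≤ (a : ℤ) + e' := h.2.2.2.1

lemma odd_ge_three {a : ℕ} (h : Odd a) (h1 : a ≠ 1) (h0 : 0 < a) : 3 ≤ a := by
  rcases h with ⟨k, hk⟩; omega

/-- Range lemma. -/
lemma ocf_range : ∀ (L : List (ℤ × ℕ)), ocfValid L → ∀ e a t, L = (e,a) :: t →
    (e = 1 → 0 < ocfEval L ∧ ocfEval L ≤ 1) ∧
    (e = -1 → -1 < ocfEval L ∧ ocfEval L < 0) := by
  intro L
  induction L with
  | nil => intro _ e a t h; simp at h
  | cons p tl ih =>
    intro hv e a t' hL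
    cases hL
    have ha : 0 < a := (ocfValid_head hv).2.2
    have hvt : ocfValid tl := ocfValid_tail hv
    set v := ocfEval tl with hv_def
    have hvb : ((-1:ℚ) < v ∧ v ≤ 1) ∧ (v < 0 → (3:ℚ) ≤ (a:ℚ)) ∧ (v = 0 → tl = []) := by
      rcases tl with _ | ⟨⟨e₂, a₂⟩, t₂⟩
      · refine ⟨⟨by norm_num [hv_def, ocfEval], by norm_num [hv_def, ocfEval]⟩, ?_, fun _ => rfl⟩
        intro h; rw [hv_def] at h; norm_num [ocfEval] at h
      · have hrng := ih hvt e₂ a₂ t₂ rfl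
        rcases (ocfValid_head hvt).1 with h2 | h2
        · have h3 := hrng.1 h2
          exact ⟨⟨by linarith [h3.1], h3.2⟩, fun hlt => absurd hlt (by linarith [h3.1]),
            fun h0 => by simp [hv_def] at h0; linarith [h3.1]⟩
        · have h3 := hrng.2 h2
          have hlink := ocfValid_cons_link (e' := e₂) hv
          rw [h2] at hlink
          have ha3 : (3:ℤ) ≤ (a:ℤ) := by linarith
          exact ⟨⟨h3.1, by linarith [h3.2]⟩, fun _ => by exact_mod_cast ha3,
            fun h0 => by rw [hv_def] at h0; linarith [h3.2]⟩
    obtain ⟨⟨hv1, hv2⟩, hva3, hv0⟩ := hvb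
    have haQ : (1:ℚ) ≤ a := by exact_mod_cast ha
    have hpos : 0 < (a:ℚ) + v := by
      rcases lt_or_ge v 0 with h | h
      · linarith [hva3 h]
      · linarith
    have heval : ocfEval ((e,a) :: tl) = (e:ℚ) / ((a:ℚ) + v) := rfl
    constructor
    · rintro rfl
      rw [heval]
      refine ⟨by positivity, ?_⟩
      rw [div_le_one hpos]
      push_cast
      rcases lt_or_ge v 0 with h | h
      · linarith [hva3 h]
      · linarith
    · rintro rfl
      rw [heval]
      have hne1 : (1:ℚ) < (a:ℚ) + v := by
        rcases lt_or_ge v 0 with h | h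
        · linarith [hva3 h]
        · rcases eq_or_lt_of_le h with h0 | h0
          · have htl : tl = [] := hv0 h0.symm
            subst htl
            have hval : ocfValid [((-1:ℤ), a)] := hv
            have ha1 : a ≠ 1 := by
              intro h1
              have := hval.2.2.2 h1
              norm_num at this
            have ha3 : 3 ≤ a := odd_ge_three (ocfValid_head hv).2.1 ha1 ha
            have : (3:ℚ) ≤ (a:ℚ) := by exact_mod_cast ha3
            linarith
          · rcases eq_or_lt_of_le haQ with hA | hA
            · linarith
            · linarith
      constructor
      · push_cast
        rw [neg_div, neg_lt_neg_iff, div_lt_one hpos]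
        linarith
      · push_cast
        rw [neg_div, neg_lt_zero]
        positivity

lemma ocf_range' (L : List (ℤ × ℕ)) (h : ocfValid L) :
    (-1:ℚ) < ocfEval L ∧ ocfEval L ≤ 1 := by
  rcases L with _ | ⟨⟨e, a⟩, t⟩
  · norm_num [ocfEval]
  · rcases (ocfValid_head h).1 with h1 | h1
    · have := (ocf_range _ h e a t rfl).1 h1
      exact ⟨by linarith [this.1], this.2⟩
    · have := (ocf_range _ h e a t rfl).2 h1
      exact ⟨this.1, by linarith [this.2]⟩

lemma ocf_sign_pos {e : ℤ} {a t} (h : ocfValid ((e,a)::t)) :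
    0 < ocfEval ((e,a)::t) ↔ e = 1 := by
  rcases (ocfValid_head h).1 with h1 | h1
  · subst h1
    exact ⟨fun _ => rfl, fun _ => ((ocf_range _ h 1 a t rfl).1 rfl).1⟩
  · subst h1
    have := (ocf_range _ h (-1) a t rfl).2 rfl
    constructor
    · intro hp; linarith [this.2]
    · intro hc; norm_num at hc
lemma ocf_ne_zero {e a t} (h : ocfValid ((e,a)::t)) : ocfEval ((e,a)::t) ≠ 0 := by
  rcases (ocfValid_head h).1 with h1 | h1
  · have := (ocf_range _ h e a t rfl).1 h1; linarith [this.1]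
  · have := (ocf_range _ h e a t rfl).2 h1; linarith [this.2]

/-- Uniqueness: a valid list is determined by its value. -/
lemma ocf_unique : ∀ (L M : List (ℤ × ℕ)), ocfValid L → ocfValid M →
    ocfEval L = ocfEval M → L = M := by
  intro L
  induction L with
  | nil =>
    intro M _ hM hval
    rcases M with _ | ⟨⟨f, b⟩, u⟩
    · rfl
    · exact absurd hval.symm (by simpa [ocfEval] using ocf_ne_zero hM)
  | cons p tl ih =>
    rcases p with ⟨e, a⟩
    intro M hL hM hval
    rcases M with _ | ⟨⟨f, b⟩, u⟩
    · exact absurd hval (by simpa [ocfEval] using ocf_ne_zero hL)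
    · -- same sign
      have hef : e = f := by
        rcases (ocfValid_head hL).1 with h1 | h1 <;> rcases (ocfValid_head hM).1 with h2 | h2
        · rw [h1, h2]
        · exfalso
          have hp := ((ocf_range _ hL e a tl rfl).1 h1).1
          have hn := ((ocf_range _ hM f b u rfl).2 h2).2
          rw [hval] at hp; linarith
        · exfalso
          have hn := ((ocf_range _ hL e a tl rfl).2 h1).2
          have hp := ((ocf_range _ hM f b u rfl).1 h2).1
          rw [hval] at hn; linarith
        · rw [h1, h2]
      subst hef
      set v := ocfEval tl with hv
      set w := ocfEval u with hw
      have hvt : ocfValid tl := ocfValid_tail hL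
      have hwu : ocfValid u := ocfValid_tail hM
      have hvr := ocf_range' tl hvt
      have hwr := ocf_range' u hwu
      have hL0 : ocfEval ((e,a)::tl) ≠ 0 := ocf_ne_zero hL
      have he0 : (e:ℚ) ≠ 0 := by
        rcases (ocfValid_head hL).1 with h1 | h1 <;> rw [h1] <;> norm_num
      have hav : ((a:ℚ) + v) ≠ 0 := by
        intro h0
        apply hL0
        show (e:ℚ) / ((a:ℚ) + v) = 0
        rw [h0, div_zero]
      have hbw : ((b:ℚ) + w) ≠ 0 := by
        intro h0
        apply ocf_ne_zero hM
        show (e:ℚ) / ((b:ℚ) + w) = 0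
        rw [h0, div_zero]
      have heq : (a:ℚ) + v = (b:ℚ) + w := by
        have h' : (e:ℚ) / ((a:ℚ) + v) = (e:ℚ) / ((b:ℚ) + w) := hval
        rw [div_eq_div_iff hav hbw] at h'
        exact mul_left_cancel₀ he0 (by linarith [h'])
      have hab : a = b := by
        have hva : Odd a := (ocfValid_head hL).2.1
        have hvb : Odd b := (ocfValid_head hM).2.1
        have h1 : ((a:ℚ) - b) = w - v := by linarith
        have hq1 : ((a:ℚ) - b) < 2 := by rw [h1]; linarith [hwr.2, hvr.1]
        have hq2 : (-2:ℚ) < ((a:ℚ) - b) := by rw [h1]; linarith [hvr.2, hwr.1]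
        have hz1 : ((a:ℤ) - b) < 2 := by exact_mod_cast hq1
        have hz2 : (-2:ℤ) < ((a:ℤ) - b) := by exact_mod_cast hq2
        rcases hva with ⟨k, hk⟩
        rcases hvb with ⟨m, hm⟩
        omega
      subst hab
      have hvw : v = w := by linarith
      rw [ih u hvt hwu hvw]

/-- Column recursion: `cvec x V = M_V ⬝ x` where `M_V` is the product of the
matrices `[[0,e],[1,a]]` over the entries of `V`. -/
def cvec (x : ℤ × ℤ) : List (ℤ × ℕ) → ℤ × ℤ
  | [] => x
  | (e, a) :: t => (e * (cvec x t).2, (cvec x t).1 + (a:ℤ) * (cvec x t).2)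

def mA (L : List (ℤ × ℕ)) : ℤ := (cvec (1,0) L).1
def mC (L : List (ℤ × ℕ)) : ℤ := (cvec (1,0) L).2
def mB (L : List (ℤ × ℕ)) : ℤ := (cvec (0,1) L).1
def mD (L : List (ℤ × ℕ)) : ℤ := (cvec (0,1) L).2

lemma cvec_append (x : ℤ × ℤ) (L M : List (ℤ × ℕ)) :
    cvec x (L ++ M) = cvec (cvec x M) L := by
  induction L with
  | nil => rfl
  | cons p t ih => rcases p with ⟨e, a⟩; simp [cvec, ih]

lemma cvec_eq (p q : ℤ) (L : List (ℤ × ℕ)) :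
    cvec (p, q) L = (p * mA L + q * mB L, p * mC L + q * mD L) := by
  induction L with
  | nil => simp [cvec, mA, mB, mC, mD]
  | cons h t ih =>
    rcases h with ⟨e, a⟩
    simp only [cvec, ih, mA, mB, mC, mD, Prod.mk.injEq]
    constructor <;> ring

lemma mat_cons (e : ℤ) (a : ℕ) (t : List (ℤ × ℕ)) :
    mA ((e,a)::t) = e * mC t ∧ mB ((e,a)::t) = e * mD t ∧
    mC ((e,a)::t) = mA t + a * mC t ∧ mD ((e,a)::t) = mB t + a * mD t := by
  refine ⟨rfl, rfl, rfl, rfl⟩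

lemma mat_nil : mA [] = 1 ∧ mB [] = 0 ∧ mC [] = 0 ∧ mD [] = 1 := ⟨rfl, rfl, rfl, rfl⟩

/-- determinant is `±1` for valid lists -/
lemma ocf_det : ∀ (L : List (ℤ × ℕ)), ocfValid L →
    mA L * mD L - mB L * mC L = 1 ∨ mA L * mD L - mB L * mC L = -1 := by
  intro L
  induction L with
  | nil => intro _; left; simp [mA, mB, mC, mD, cvec]
  | cons p t ih =>
    rcases p with ⟨e, a⟩
    intro hv
    have he := (ocfValid_head hv).1
    have ih' := ih (ocfValid_tail hv)
    have hexp : mA ((e,a)::t) * mD ((e,a)::t) - mB ((e,a)::t) * mC ((e,a)::t)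
        = -e * (mA t * mD t - mB t * mC t) := by
      simp only [mat_cons]; ring
    rcases he with rfl | rfl <;> rcases ih' with h | h <;> rw [hexp, h] <;> norm_num

lemma ocf_eval_mat : ∀ (L : List (ℤ × ℕ)), ocfValid L →
    1 ≤ mD L ∧ ocfEval L = (mB L : ℚ) / (mD L : ℚ) := by
  intro L
  induction L with
  | nil => intro _; exact ⟨le_refl _, by norm_num [ocfEval, mB, mD, cvec]⟩
  | cons p t ih =>
    rcases p with ⟨e, a⟩
    intro hv
    obtain ⟨hD, hE⟩ := ih (ocfValid_tail hv)
    have ha : 0 < a := (ocfValid_head hv).2.2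
    have hr := ocf_range' t (ocfValid_tail hv)
    have hDq : (0:ℚ) < (mD t : ℚ) := by exact_mod_cast hD
    have hBle : mB t ≤ mD t := by
      have : (mB t : ℚ) ≤ (mD t : ℚ) := by
        rw [hE] at hr
        calc (mB t : ℚ) = (mB t : ℚ) / mD t * mD t := by field_simp
        _ ≤ 1 * mD t := by apply mul_le_mul_of_nonneg_right hr.2 (le_of_lt hDq)
        _ = mD t := one_mul _
      exact_mod_cast this
    have hBgt : -(mD t) < mB t := by
      have : -(mD t : ℚ) < (mB t : ℚ) := by
        rw [hE] at hr
        have := hr.1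
        calc -(mD t : ℚ) = -1 * mD t := by ring
        _ < (mB t : ℚ) / mD t * mD t := by
            apply mul_lt_mul_of_pos_right this hDq
        _ = mB t := by field_simp
      exact_mod_cast this
    have hD' : 1 ≤ mD ((e,a)::t) := by
      rw [(mat_cons e a t).2.2.2]
      rcases le_or_gt 0 (mB t) with hB | hB
      · have : (1:ℤ) ≤ a := by exact_mod_cast ha
        nlinarith
      · -- v < 0, head sign of t is -1, so a ≥ 3
        have hvneg : ocfEval t < 0 := by
          rw [hE]
          apply div_neg_of_neg_of_pos _ hDq
          exact_mod_cast hB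
        rcases t with _ | ⟨⟨f, b⟩, t'⟩
        · simp [mB, cvec] at hB
        · have hf : f = -1 := by
            rcases (ocfValid_head (ocfValid_tail hv)).1 with h1 | h1
            · exfalso
              have := ((ocf_range _ (ocfValid_tail hv) f b t' rfl).1 h1).1
              linarith
            · exact h1
          have hlink := ocfValid_cons_link (e' := f) hv
          rw [hf] at hlink
          have ha3 : (3:ℤ) ≤ (a:ℤ) := by linarith
          nlinarith
    refine ⟨hD', ?_⟩
    have hD'q : (0:ℚ) < (mD ((e,a)::t) : ℚ) := by exact_mod_cast hD'
    have hsum : (a:ℚ) + ocfEval t = (mD ((e,a)::t) : ℚ) / (mD t : ℚ) := by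
      rw [(mat_cons e a t).2.2.2, hE]
      push_cast
      field_simp
      ring
    show (e:ℚ) / ((a:ℚ) + ocfEval t) = (mB ((e,a)::t) : ℚ) / (mD ((e,a)::t) : ℚ)
    rw [hsum, div_div_eq_mul_div, (mat_cons e a t).2.1]
    push_cast
    ring_nf

lemma ocf_C : ∀ (L : List (ℤ × ℕ)), ocfValid L → 0 ≤ mC L ∧ (L ≠ [] → 1 ≤ mC L) ∧
    (∀ e a t, L = (e,a)::t → (e = 1 → 0 ≤ mA L) ∧ (e = -1 → mA L ≤ 0) ∧ mC t ≤ mC L) := by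
  intro L
  induction L with
  | nil => exact fun _ => ⟨le_refl _, fun h => absurd rfl h, fun e a t h => by simp at h⟩
  | cons p t ih =>
    rcases p with ⟨e, a⟩
    intro hv
    obtain ⟨hC0, hC1, hQ⟩ := ih (ocfValid_tail hv)
    have ha : (1:ℤ) ≤ (a:ℤ) := by exact_mod_cast (ocfValid_head hv).2.2
    have hAL : mA ((e,a)::t) = e * mC t := (mat_cons e a t).1
    have hCL : mC ((e,a)::t) = mA t + a * mC t := (mat_cons e a t).2.2.1
    have key : 1 ≤ mC ((e,a)::t) ∧ mC t ≤ mC ((e,a)::t) := by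
      rcases t with _ | ⟨⟨f, b⟩, t'⟩
      · constructor
        · rw [hCL]; norm_num [mA, mC, cvec]
        · rw [hCL]; norm_num [mA, mC, cvec]
      · have hCt1 : 1 ≤ mC ((f,b)::t') := hC1 (by simp)
        obtain ⟨hf1, hf2, hf3⟩ := hQ f b t' rfl
        rcases (ocfValid_head (ocfValid_tail hv)).1 with hf | hf
        · have := hf1 hf
          constructor <;> [nlinarith; nlinarith]
        · have hAt : mA ((f,b)::t') = f * mC t' := (mat_cons f b t').1
          have hlink := ocfValid_cons_link (e' := f) hv
          rw [hf] at hlink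
          have ha3 : (3:ℤ) ≤ (a:ℤ) := by linarith
          have : mA ((f,b)::t') = - mC t' := by rw [hAt, hf]; ring
          have hC't : mC t' ≤ mC ((f,b)::t') := by
            rcases t' with _ | ⟨⟨g, c⟩, t''⟩
            · have h0 : mC ([] : List (ℤ × ℕ)) = 0 := rfl
              rw [h0]; linarith
            · exact hf3
          constructor <;> nlinarith
    refine ⟨by linarith [key.1], fun _ => key.1, ?_⟩
    rintro e' a' t'' h
    cases h
    exact ⟨fun he => by rw [hAL, he]; simpa using hC0,
           fun he => by rw [hAL, he]; simpa using hC0, key.2⟩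

lemma ocf_valid_last_one {e f : ℤ} {a : ℕ} (hv : ocfValid ((e,a)::[(f,(1:ℕ))])) : f = 1 := by
  have := ocfValid_tail hv
  exact this.2.2.2 rfl

lemma ocf_K : ∀ (n : ℕ) (L : List (ℤ × ℕ)), L.length ≤ n → ocfValid L →
    0 ≤ mD L - mC L ∧ (mD L - mC L = 0 → L = [((1:ℤ),(1:ℕ))]) ∧
    (∀ e a f b t', L = (e,a)::(f,b)::t' →
      mD ((f,b)::t') - mC ((f,b)::t') ≤ mD L - mC L) := by
  intro n
  induction n with
  | zero =>
    intro L hlen _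
    rcases L with _ | ⟨p, t⟩
    · refine ⟨by norm_num [mD, mC, cvec], by norm_num [mD, mC, cvec], ?_⟩
      rintro e a f b t' h; simp at h
    · simp at hlen
  | succ n ih =>
    intro L hlen hv
    rcases L with _ | ⟨⟨e, a⟩, t⟩
    · refine ⟨by norm_num [mD, mC, cvec], by norm_num [mD, mC, cvec], ?_⟩
      rintro e a f b t' h; simp at h
    · have ha : (1:ℤ) ≤ (a:ℤ) := by exact_mod_cast (ocfValid_head hv).2.2
      have hKL : mD ((e,a)::t) - mC ((e,a)::t)
          = (mB t - mA t) + a * (mD t - mC t) := by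
        rw [(mat_cons e a t).2.2.2, (mat_cons e a t).2.2.1]; ring
      rcases t with _ | ⟨⟨f, b⟩, t'⟩
      · -- singleton
        have hBA : mB ([] : List (ℤ × ℕ)) - mA [] = -1 := by norm_num [mA, mB, cvec]
        have hDC : mD ([] : List (ℤ × ℕ)) - mC [] = 1 := by norm_num [mD, mC, cvec]
        rw [hKL, hBA, hDC]
        refine ⟨by linarith, ?_, ?_⟩
        · intro h0
          have : (a:ℤ) = 1 := by linarith
          have ha1 : a = 1 := by exact_mod_cast this
          subst ha1
          have he1 : e = 1 := hv.2.2.2 rfl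
          rw [he1]
        · rintro e' a' f b t' h; simp at h
      · -- length ≥ 2
        set t := ((f,b)::t' : List (ℤ × ℕ)) with ht
        have hvt : ocfValid t := ocfValid_tail hv
        have hlent : t.length ≤ n := by simp at hlen ⊢; omega
        obtain ⟨iK0, iK1, iK3⟩ := ih t hlent hvt
        have hBAt : mB t - mA t = f * (mD t' - mC t') := by
          rw [(mat_cons f b t').2.1, (mat_cons f b t').1]; ring
        have hb : (1:ℤ) ≤ (b:ℤ) := by exact_mod_cast (ocfValid_head hvt).2.2
        have hlink := ocfValid_cons_link (e' := f) hv
        have hf : f = 1 ∨ f = -1 := (ocfValid_head hvt).1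
        have main : 0 ≤ mD ((e,a)::t) - mC ((e,a)::t) ∧
            (mD ((e,a)::t) - mC ((e,a)::t) = 0 → False) ∧
            mD t - mC t ≤ mD ((e,a)::t) - mC ((e,a)::t) := by
          rcases t' with _ | ⟨⟨g, c⟩, t''⟩
          · -- t = [(f,b)]
            have hKt' : mD ([] : List (ℤ × ℕ)) - mC [] = 1 := by norm_num [mD, mC, cvec]
            have hKt : mD t - mC t = (b:ℤ) - 1 := by
              rw [ht, (mat_cons f b []).2.2.2, (mat_cons f b []).2.2.1]
              norm_num [mA, mB, mC, mD, cvec]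
            rcases eq_or_ne b 1 with hb1 | hb1
            · subst hb1
              have hf1 : f = 1 := ocf_valid_last_one (ht ▸ hv)
              rw [hKL, hBAt, hKt', hf1, hKt]
              norm_num
            · have hb3 : (3:ℤ) ≤ (b:ℤ) := by
                exact_mod_cast odd_ge_three (ocfValid_head hvt).2.1 hb1 (ocfValid_head hvt).2.2
              rw [hKL, hBAt, hKt', hKt]
              rcases hf with rfl | rfl
              · refine ⟨by nlinarith, fun h => by nlinarith, by nlinarith⟩
              · have ha3 : (3:ℤ) ≤ (a:ℤ) := by linarith
                refine ⟨by nlinarith, fun h => by nlinarith, by nlinarith⟩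
          · -- t length ≥ 2
            have hKt1 : 1 ≤ mD t - mC t := by
              rcases lt_or_eq_of_le iK0 with h | h
              · linarith
              · exfalso
                have := iK1 h.symm
                rw [ht] at this
                simp at this
            have hKt'0 : 0 ≤ mD ((g,c)::t'') - mC ((g,c)::t'') := by
              have hvt' : ocfValid ((g,c)::t'') := ocfValid_tail hvt
              have : ((g,c)::t'' : List (ℤ × ℕ)).length ≤ n := by
                rw [ht] at hlent; simp at hlent ⊢; omega
              exact (ih _ this hvt').1
            have hKt'le : mD ((g,c)::t'') - mC ((g,c)::t'') ≤ mD t - mC t := iK3 f b g c t'' rfl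
            rw [hKL, hBAt]
            rcases hf with rfl | rfl
            · refine ⟨by nlinarith, fun h => by nlinarith, by nlinarith⟩
            · have ha3 : (3:ℤ) ≤ (a:ℤ) := by linarith
              refine ⟨by nlinarith, fun h => by nlinarith, by nlinarith⟩
        refine ⟨main.1, fun h => absurd h (fun h0 => main.2.1 h0), ?_⟩
        · rintro e₁ a₁ f₁ b₁ t₁ hh
          rw [ht] at hh
          obtain ⟨⟨rfl, rfl⟩, ⟨rfl, rfl⟩, rfl⟩ :
              (e = e₁ ∧ a = a₁) ∧ (f = f₁ ∧ b = b₁) ∧ t' = t₁ := by simpa using hh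
          exact main.2.2

lemma ocfValid_cons_iff {e : ℤ} {a : ℕ} {t : List (ℤ × ℕ)} :
    ocfValid ((e,a)::t) ↔ (e = 1 ∨ e = -1) ∧ Odd a ∧ 0 < a ∧
      ((t = [] → (a = 1 → e = 1)) ∧
       (∀ f b t', t = (f,b)::t' → 2 ≤ (a:ℤ) + f ∧ ocfValid ((f,b)::t'))) := by
  rcases t with _ | ⟨⟨f, b⟩, t'⟩
  · constructor
    · intro h
      exact ⟨h.1, h.2.1, h.2.2.1, fun _ => h.2.2.2, fun f b t' h' => by simp at h'⟩
    · intro h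
      exact ⟨h.1, h.2.1, h.2.2.1, h.2.2.2.1 rfl⟩
  · constructor
    · intro h
      refine ⟨h.1, h.2.1, h.2.2.1, fun h' => by simp at h', ?_⟩
      rintro f' b' t'' h'
      obtain ⟨⟨rfl, rfl⟩, rfl⟩ : ((f = f' ∧ b = b') ∧ t' = t'') := by simpa using h'
      exact ⟨h.2.2.2.1, h.2.2.2.2⟩
    · intro h
      exact ⟨h.1, h.2.1, h.2.2.1, (h.2.2.2.2 f b t' rfl).1, (h.2.2.2.2 f b t' rfl).2⟩

lemma ocf_valid_append : ∀ (L M : List (ℤ × ℕ)), ocfValid L → ocfValid M →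
    (∀ e₀ a₀ e₁ a₁ M', L.getLast? = some (e₀,a₀) → M = (e₁,a₁)::M' → 2 ≤ (a₀:ℤ) + e₁) →
    ocfValid (L ++ M) := by
  intro L
  induction L with
  | nil => intro M _ hM _; simpa using hM
  | cons p t ih =>
    rcases p with ⟨e, a⟩
    intro M hL hM hlink
    rcases t with _ | ⟨⟨f, b⟩, t'⟩
    · rcases M with _ | ⟨⟨e₁, a₁⟩, M'⟩
      · simpa using hL
      · rw [List.singleton_append, ocfValid_cons_iff]
        refine ⟨hL.1, hL.2.1, hL.2.2.1, fun h => by simp at h, ?_⟩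
        rintro f' b' t'' h'
        obtain ⟨⟨rfl, rfl⟩, rfl⟩ : ((e₁ = f' ∧ a₁ = b') ∧ M' = t'') := by simpa using h'
        exact ⟨hlink e a e₁ a₁ M' rfl rfl, hM⟩
    · rw [List.cons_append, ocfValid_cons_iff]
      have hrest : ocfValid (((f,b)::t') ++ M) := by
        apply ih _ (ocfValid_tail hL) hM
        intro e₀ a₀ e₁ a₁ M' hlast hMeq
        exact hlink e₀ a₀ e₁ a₁ M' (by rw [← hlast, List.getLast?_cons_cons]) hMeq
      refine ⟨hL.1, hL.2.1, hL.2.2.1, fun h => by simp at h, ?_⟩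
      rintro f' b' t'' h'
      obtain ⟨⟨rfl, rfl⟩, rfl⟩ : ((f = f' ∧ b = b') ∧ t' ++ M = t'') := by simpa using h'
      exact ⟨hL.2.2.2.1, hrest⟩

lemma ocf_valid_replace {e' e : ℤ} {a' : ℕ} : ∀ (L₁ : List (ℤ × ℕ)),
    ocfValid (L₁ ++ [(e',a'), (e,1)]) → ocfValid (L₁ ++ [(e', a'+2)]) := by
  intro L₁
  induction L₁ with
  | nil =>
    intro h
    simp only [List.nil_append] at h ⊢
    rw [ocfValid_cons_iff] at h
    refine ⟨h.1, ?_, by omega, by omega⟩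
    rcases h.2.1 with ⟨k, hk⟩
    exact ⟨k+1, by omega⟩
  | cons p t ih =>
    rcases p with ⟨g, c⟩
    intro h
    rw [List.cons_append] at h ⊢
    rw [ocfValid_cons_iff] at h ⊢
    obtain ⟨h1, h2, h3, -, h5⟩ := h
    refine ⟨h1, h2, h3, fun hc => by simp at hc, ?_⟩
    rintro f' b' t'' h'
    rcases t with _ | ⟨⟨g₂, c₂⟩, t₂⟩
    · simp only [List.nil_append] at h' ⊢
      obtain ⟨⟨rfl, rfl⟩, rfl⟩ : ((e' = f' ∧ a' + 2 = b') ∧ ([] : List (ℤ × ℕ)) = t'') := by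
        simpa using h'
      have := h5 e' a' [(e,1)] rfl
      exact ⟨this.1, ih (by simpa using this.2)⟩
    · simp only [List.cons_append] at h' ⊢
      obtain ⟨⟨rfl, rfl⟩, rfl⟩ : ((g₂ = f' ∧ c₂ = b') ∧ t₂ ++ [(e', a'+2)] = t'') := by
        simpa using h'
      have := h5 g₂ c₂ (t₂ ++ [(e',a'), (e,1)]) (by simp)
      exact ⟨this.1, by have := ih (by simpa using this.2); simpa using this⟩

lemma ocf_last_one : ∀ (P : List (ℤ × ℕ)) (e : ℤ), ocfValid (P ++ [(e, 1)]) → e = 1 := by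
  intro P
  induction P with
  | nil => intro e h; exact h.2.2.2 rfl
  | cons p t ih =>
    rcases p with ⟨g, c⟩
    intro e h
    rw [List.cons_append] at h
    have := ocfValid_tail h
    exact ih e (by simpa using this)


lemma qsum_append (L M : List (ℤ × ℕ)) : qsum (L ++ M) = qsum L + qsum M := by
  simp [qsum]




/-- the unimodularity relation on adjacent Stern–Brocot elements -/
def Rrel (x y : ℚ) : Prop := x < y ∧ y.num * (x.den : ℤ) - x.num * (y.den : ℤ) = 1

lemma mediant_num_den {x y : ℚ} (h : Rrel x y) :
    (mediant x y).num = x.num + y.num ∧ ((mediant x y).den : ℤ) = (x.den : ℤ) + y.den := by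
  have hb0 : (0:ℤ) < (x.den : ℤ) + (y.den : ℤ) := by positivity
  have hcop : Nat.Coprime (x.num + y.num).natAbs ((x.den : ℤ) + (y.den : ℤ)).natAbs := by
    have hco : IsCoprime (x.num + y.num) ((x.den : ℤ) + (y.den : ℤ)) := by
      refine ⟨(x.den : ℤ), -x.num, ?_⟩
      have := h.2
      ring_nf
      ring_nf at this
      linarith
    exact Int.isCoprime_iff_gcd_eq_one.mp hco
  have hme : mediant x y = ((x.num + y.num : ℤ) : ℚ) / (((x.den : ℤ) + (y.den : ℤ) : ℤ) : ℚ) := by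
    rw [mediant]
    push_cast
    ring_nf
  constructor
  · rw [hme]; exact Rat.num_div_eq_of_coprime hb0 hcop
  · rw [hme, Rat.den_div_eq_of_coprime hb0 hcop]

lemma Rrel_mediant_left {x y : ℚ} (h : Rrel x y) : Rrel x (mediant x y) := by
  obtain ⟨hn, hd⟩ := mediant_num_den h
  constructor
  · rw [Rat.lt_iff, hn, hd]
    nlinarith [h.2, x.pos, y.pos]
  · rw [hn, hd]; linarith [h.2]

lemma Rrel_mediant_right {x y : ℚ} (h : Rrel x y) : Rrel (mediant x y) y := by
  obtain ⟨hn, hd⟩ := mediant_num_den h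
  constructor
  · rw [Rat.lt_iff, hn, hd]
    nlinarith [h.2, x.pos, y.pos]
  · rw [hn, hd]; linarith [h.2]

def ins : List ℚ → List ℚ
  | x :: y :: t => x :: mediant x y :: ins (y :: t)
  | l => l

def SBlist : ℕ → List ℚ
  | 0 => [(0:ℚ), 1]
  | n + 1 => ins (SBlist n)

def Adj (l : List ℚ) (x y : ℚ) : Prop := ∃ l₁ l₂, l = l₁ ++ x :: y :: l₂

lemma adj_cons {c : ℚ} {l : List ℚ} {x y : ℚ} :
    Adj (c :: l) x y ↔ (c = x ∧ ∃ l₂, l = y :: l₂) ∨ Adj l x y := by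
  constructor
  · rintro ⟨l₁, l₂, h⟩
    rcases l₁ with _ | ⟨d, l₁'⟩
    · simp at h
      exact Or.inl ⟨h.1, l₂, h.2⟩
    · simp at h
      exact Or.inr ⟨l₁', l₂, h.2⟩
  · rintro (⟨rfl, l₂, rfl⟩ | ⟨l₁, l₂, rfl⟩)
    · exact ⟨[], l₂, rfl⟩
    · exact ⟨c :: l₁, l₂, rfl⟩

lemma adj_nil {x y : ℚ} : ¬ Adj [] x y := by rintro ⟨l₁, l₂, h⟩; simp at h

lemma adj_singleton {c x y : ℚ} : ¬ Adj [c] x y := by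
  rintro ⟨l₁, l₂, h⟩
  rcases l₁ with _ | ⟨d, l₁'⟩ <;> simp at h

lemma adj_pair {x y u v : ℚ} {t : List ℚ} :
    Adj (x :: y :: t) u v ↔ (x = u ∧ y = v) ∨ Adj (y :: t) u v := by
  rw [adj_cons]
  constructor
  · rintro (⟨rfl, l₂, h⟩ | h)
    · obtain ⟨rfl, rfl⟩ := List.cons.inj h
      exact Or.inl ⟨rfl, rfl⟩
    · exact Or.inr h
  · rintro (⟨rfl, rfl⟩ | h)
    · exact Or.inl ⟨rfl, t, rfl⟩
    · exact Or.inr h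

lemma mem_ins : ∀ (l : List ℚ) (a : ℚ),
    a ∈ ins l ↔ a ∈ l ∨ ∃ x y, Adj l x y ∧ a = mediant x y := by
  intro l
  induction l with
  | nil => intro a; simp [ins, adj_nil]
  | cons c l ih =>
    rcases l with _ | ⟨d, t⟩
    · intro a
      simp only [ins]
      constructor
      · intro h; exact Or.inl h
      · rintro (h | ⟨x, y, hadj, -⟩)
        · exact h
        · exact absurd hadj adj_singleton
    · intro a
      have hins : ins (c :: d :: t) = c :: mediant c d :: ins (d :: t) := rfl
      rw [hins]
      simp only [List.mem_cons]
      constructor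
      · rintro (rfl | rfl | h)
        · exact Or.inl (Or.inl rfl)
        · exact Or.inr ⟨c, d, adj_pair.mpr (Or.inl ⟨rfl, rfl⟩), rfl⟩
        · rcases (ih a).mp h with h' | ⟨x, y, hadj, rfl⟩
          · rcases List.mem_cons.mp h' with rfl | h''
            · exact Or.inl (Or.inr (Or.inl rfl))
            · exact Or.inl (Or.inr (Or.inr h''))
          · exact Or.inr ⟨x, y, adj_pair.mpr (Or.inr hadj), rfl⟩
      · rintro (h | ⟨x, y, hadj, rfl⟩)
        · rcases h with rfl | h'
          · exact Or.inl rfl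
          · exact Or.inr (Or.inr ((ih a).mpr (Or.inl (List.mem_cons.mpr h'))))
        · rcases adj_pair.mp hadj with ⟨rfl, rfl⟩ | h'
          · exact Or.inr (Or.inl rfl)
          · exact Or.inr (Or.inr ((ih _).mpr (Or.inr ⟨x, y, h', rfl⟩)))

lemma ins_cons_head (y : ℚ) (t : List ℚ) : ∃ s, ins (y :: t) = y :: s := by
  rcases t with _ | ⟨z, t'⟩
  · exact ⟨[], rfl⟩
  · exact ⟨mediant y z :: ins (z :: t'), rfl⟩

lemma chain_ins : ∀ (l : List ℚ), List.Chain' Rrel l → List.Chain' Rrel (ins l) := by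
  intro l
  induction l with
  | nil => intro h; exact h
  | cons c l ih =>
    rcases l with _ | ⟨d, t⟩
    · intro h; exact h
    · intro h
      rw [List.Chain'] at h ⊢; rw [List.isChain_cons_cons] at h
      have hins : ins (c :: d :: t) = c :: mediant c d :: ins (d :: t) := rfl
      rw [hins]
      obtain ⟨s, hs⟩ := ins_cons_head d t
      rw [List.isChain_cons_cons]
      refine ⟨Rrel_mediant_left h.1, ?_⟩
      rw [hs, List.isChain_cons_cons]
      have := ih h.2
      rw [hs] at this
      exact ⟨Rrel_mediant_right h.1, this⟩

lemma chain_SBlist : ∀ n, List.Chain' Rrel (SBlist n) := by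
  intro n
  induction n with
  | zero =>
    simp [SBlist, List.Chain', List.isChain_cons_cons]
    constructor
    · norm_num [Rrel]
    · simp
  | succ n ih => exact chain_ins _ ih

lemma pairwise_SBlist (n : ℕ) : List.Pairwise (· < ·) (SBlist n) := by
  have := chain_SBlist n
  have h2 : List.Chain' (· < ·) (SBlist n) := List.IsChain.imp (fun a b h => h.1) this
  exact List.isChain_iff_pairwise.mp h2

lemma adj_Rrel {n : ℕ} {x y : ℚ} (h : Adj (SBlist n) x y) : Rrel x y := by
  obtain ⟨l₁, l₂, hl⟩ := h
  have hc := chain_SBlist n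
  rw [hl] at hc
  have : List.Chain' Rrel (x :: y :: l₂) := hc.suffix ⟨l₁, rfl⟩
  exact (List.isChain_cons_cons.mp this).1

lemma adj_spec {l : List ℚ} (hp : List.Pairwise (· < ·) l) {x y : ℚ} (h : Adj l x y) :
    x ∈ l ∧ y ∈ l ∧ x < y ∧ ∀ t ∈ l, t ≤ x ∨ y ≤ t := by
  obtain ⟨l₁, l₂, rfl⟩ := h
  obtain ⟨hp1, hp2, hcross⟩ := List.pairwise_append.mp hp
  have hx : x < y ∧ ∀ b ∈ l₂, x < b := by
    have := List.pairwise_cons.mp hp2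
    exact ⟨this.1 y (by simp), fun b hb => this.1 b (by simp [hb])⟩
  have hy : ∀ b ∈ l₂, y < b := by
    have := List.pairwise_cons.mp (List.pairwise_cons.mp hp2).2
    exact this.1
  refine ⟨by simp, by simp, hx.1, ?_⟩
  intro t ht
  rcases List.mem_append.mp ht with h1 | h1
  · exact Or.inl (le_of_lt (hcross t h1 x (by simp)))
  · rcases List.mem_cons.mp h1 with rfl | h2
    · exact Or.inl (le_refl _)
    · rcases List.mem_cons.mp h2 with rfl | h3
      · exact Or.inr (le_refl _)
      · exact Or.inr (le_of_lt (hy t h3))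

lemma mem_between : ∀ (l : List ℚ), List.Pairwise (· < ·) l → ∀ {x y : ℚ}, x ∈ l → y ∈ l →
    x < y → (∀ t ∈ l, t ≤ x ∨ y ≤ t) → Adj l x y := by
  intro l
  induction l with
  | nil => intro _ x y hx; simp at hx
  | cons a l' ih =>
    intro hp x y hx hy hxy hno
    obtain ⟨ha, hp'⟩ := List.pairwise_cons.mp hp
    rcases List.mem_cons.mp hx with rfl | hx'
    · -- x = a
      have hy' : y ∈ l' := by
        rcases List.mem_cons.mp hy with rfl | h
        · exact absurd hxy (lt_irrefl _)
        · exact h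
      rcases l' with _ | ⟨b, l''⟩
      · simp at hy'
      · rcases List.mem_cons.mp hy' with rfl | hy'' 
        · exact ⟨[], l'', rfl⟩
        · exfalso
          have hab : x < b := ha b (by simp)
          rcases hno b (by simp) with h1 | h1
          · exact absurd hab (not_lt.mpr h1)
          · have : b < y := (List.pairwise_cons.mp hp').1 y hy''
            exact absurd h1 (not_le.mpr this)
    · have hy' : y ∈ l' := by
        rcases List.mem_cons.mp hy with rfl | h
        · exact absurd (ha x hx') (not_lt.mpr (le_of_lt hxy))
        · exact h
      have hadj : Adj l' x y := ih hp' hx' hy' hxy (fun t ht => hno t (by simp [ht]))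
      exact adj_cons.mpr (Or.inr hadj)

lemma SB_eq_SBlist : ∀ n, SB n = {q | q ∈ SBlist n} := by
  intro n
  induction n with
  | zero =>
    ext q
    simp [SB, SBlist]
  | succ n ih =>
    ext q
    show q ∈ SB n ∪ _ ↔ q ∈ ins (SBlist n)
    rw [mem_ins]
    constructor
    · rintro (h | ⟨x, y, hx, hy, hxy, hno, rfl⟩)
      · left; rw [ih] at h; exact h
      · right
        refine ⟨x, y, ?_, rfl⟩
        rw [ih] at hx hy
        apply mem_between _ (pairwise_SBlist n) hx hy hxy
        intro t ht
        exact hno t (by rw [ih]; exact ht)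
    · rintro (h | ⟨x, y, hadj, rfl⟩)
      · left; rw [ih]; exact h
      · right
        obtain ⟨hx, hy, hxy, hno⟩ := adj_spec (pairwise_SBlist n) hadj
        exact ⟨x, y, by rw [ih]; exact hx, by rw [ih]; exact hy, hxy,
          fun t ht => hno t (by rw [ih] at ht; exact ht), rfl⟩

lemma SBConsecutive_Rrel {n : ℕ} {x y : ℚ} (h : SBConsecutive n x y) : Rrel x y := by
  obtain ⟨hx, hy, hxy, hno⟩ := h
  rw [SB_eq_SBlist] at hx hy
  have hadj : Adj (SBlist n) x y := by
    apply mem_between _ (pairwise_SBlist n) hx hy hxy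
    intro t ht
    exact hno t (by rw [SB_eq_SBlist]; exact ht)
  exact adj_Rrel hadj

lemma upper_parent_unique {ξ b b' : ℚ}
    (hb : b.num * (ξ.den : ℤ) - ξ.num * (b.den : ℤ) = 1)
    (hb' : b'.num * (ξ.den : ℤ) - ξ.num * (b'.den : ℤ) = 1)
    (hdb : (b.den : ℤ) < (ξ.den : ℤ)) (hdb' : (b'.den : ℤ) < (ξ.den : ℤ)) : b = b' := by
  have hkey : (b.num - b'.num) * (ξ.den : ℤ) = ξ.num * ((b.den : ℤ) - b'.den) := by ring_nf; linarith
  have hcop : IsCoprime (ξ.den : ℤ) ξ.num := by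
    rw [Int.isCoprime_iff_gcd_eq_one]
    simpa [Int.gcd, Int.natAbs_natCast] using ξ.reduced.symm
  have hdvd : (ξ.den : ℤ) ∣ ((b.den : ℤ) - b'.den) := by
    have h1 : (ξ.den : ℤ) ∣ ξ.num * ((b.den : ℤ) - b'.den) := ⟨b.num - b'.num, by linarith [hkey]⟩
    exact hcop.dvd_of_dvd_mul_left h1
  have hden : (b.den : ℤ) = b'.den := by
    rcases hdvd with ⟨k, hk⟩
    have hb1 : (1 : ℤ) ≤ b.den := by exact_mod_cast b.pos
    have hb1' : (1 : ℤ) ≤ b'.den := by exact_mod_cast b'.pos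
    have hd1 : (1 : ℤ) ≤ ξ.den := by exact_mod_cast ξ.pos
    rcases lt_trichotomy k 0 with h | h | h
    · nlinarith
    · rw [h] at hk; linarith
    · nlinarith
  have hnum : b.num = b'.num := by
    have : (b.num - b'.num) * (ξ.den : ℤ) = 0 := by rw [hkey, hden]; ring
    have hd0 : (ξ.den : ℤ) ≠ 0 := by positivity
    have := mul_eq_zero.mp this
    rcases this with h | h
    · linarith
    · exact absurd h hd0
  exact Rat.ext hnum (by exact_mod_cast hden)

lemma ocf_valid_suffix : ∀ (L M : List (ℤ × ℕ)), ocfValid (L ++ M) → ocfValid M := by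
  intro L
  induction L with
  | nil => intro M h; exact h
  | cons p t ih =>
    rcases p with ⟨e, a⟩
    intro M h
    exact ih M (by simpa using ocfValid_tail h)



lemma Szero_eq {z : ℚ} {M : List (ℤ × ℕ)} (h : ZeroRep z M) : Szero z = qsum M := by
  have hset : {L | ZeroRep z L} = {M} := by
    ext L'
    simp only [Set.mem_setOf_eq, Set.mem_singleton_iff]
    constructor
    · intro hL'
      exact ocf_unique L' M hL'.1 h.1 (by rw [← hL'.2.2, ← h.2.2])
    · rintro rfl; exact h
  rw [Szero, hset, Set.image_singleton, csInf_singleton]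

lemma mB_append (L M : List (ℤ × ℕ)) : mB (L ++ M) = mB M * mA L + mD M * mB L := by
  show (cvec (0,1) (L ++ M)).1 = _
  rw [cvec_append]
  show (cvec (mB M, mD M) L).1 = _
  rw [cvec_eq]

lemma mD_append (L M : List (ℤ × ℕ)) : mD (L ++ M) = mB M * mC L + mD M * mD L := by
  show (cvec (0,1) (L ++ M)).2 = _
  rw [cvec_append]
  show (cvec (mB M, mD M) L).2 = _
  rw [cvec_eq]

lemma seed_one : mB [((1:ℤ),(1:ℕ))] = 1 ∧ mD [((1:ℤ),(1:ℕ))] = 1 := by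
  constructor <;> norm_num [mB, mD, cvec]

lemma seed_two : mB [((-1:ℤ),(1:ℕ)), ((1:ℤ),(1:ℕ))] = -1 ∧ mD [((-1:ℤ),(1:ℕ)), ((1:ℤ),(1:ℕ))] = 2 := by
  constructor <;> norm_num [mB, mD, cvec]

lemma seed_gen (e : ℤ) (b : ℕ) : mB [(e,b)] = e ∧ mD [(e,b)] = (b:ℤ) := by
  constructor <;> norm_num [mB, mD, cvec]

lemma seed_pair (e : ℤ) (b : ℕ) : mB [(e,b), ((1:ℤ),(1:ℕ))] = e ∧ mD [(e,b), ((1:ℤ),(1:ℕ))] = (b:ℤ) + 1 := by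
  refine ⟨by norm_num [mB, cvec], by norm_num [mD, cvec]; ring⟩

lemma mA_append (L M : List (ℤ × ℕ)) : mA (L ++ M) = mA M * mA L + mC M * mB L := by
  show (cvec (1,0) (L ++ M)).1 = _
  rw [cvec_append]
  show (cvec (mA M, mC M) L).1 = _
  rw [cvec_eq]

lemma mC_append (L M : List (ℤ × ℕ)) : mC (L ++ M) = mA M * mC L + mC M * mD L := by
  show (cvec (1,0) (L ++ M)).2 = _
  rw [cvec_append]
  show (cvec (mA M, mC M) L).2 = _
  rw [cvec_eq]

lemma seedA_pair (e : ℤ) (b : ℕ) :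
    mA [(e,b), ((1:ℤ),(1:ℕ))] = e ∧ mC [(e,b), ((1:ℤ),(1:ℕ))] = (b:ℤ) := by
  constructor <;> norm_num [mA, mC, cvec]

lemma mediant_comm (p q : ℚ) : mediant p q = mediant q p := by
  rw [mediant, mediant, add_comm p.num, add_comm p.den]

lemma valid_one : ocfValid [((1:ℤ),(1:ℕ))] := ⟨Or.inl rfl, odd_one, one_pos, fun _ => rfl⟩

lemma valid_two : ocfValid [((-1:ℤ),(1:ℕ)), ((1:ℤ),(1:ℕ))] :=
  ⟨Or.inr rfl, odd_one, one_pos, by norm_num, valid_one⟩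


/-- **Proposition 4.** Let `ξ = [0; ε₁/a₁, …, ε_l/a_l]` be a rational in `(0,1)`,
written as the mediant `ξ = x ⊕ y` of two consecutive elements `x < y` of a
Stern–Brocot sequence `𝔉_n`, and let `ξ^l = x ⊕ ξ`, `ξ^r = ξ ⊕ y` be its successors.
If `a_l = 1` then both successors increase `S⁰` by `1` and
`{ξ^l, ξ^r} = {[0; …, ε_{l−1}/(a_{l−1}+2)], [0; …, ε_l/a_l, 1/1]}` (node of first
type); if `a_l > 1` then one successor increases `S⁰` by `1` and the other by `2`, and
`{ξ^l, ξ^r} = {[0; …, ε_l/a_l, 1/1], [0; …, ε_l/a_l, −1/1, 1/1]}` (node of second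
type). -/
theorem thm13 (n : ℕ) (x y : ℚ) (hxy : SBConsecutive n x y)
    (ξ : ℚ) (hξ : ξ = mediant x y) (hξ0 : 0 < ξ) (hξ1 : ξ < 1)
    (L L₀ : List (ℤ × ℕ)) (e : ℤ) (a : ℕ)
    (hL : ZeroRep ξ L) (hsplit : L = L₀ ++ [(e, a)]) :
    (a = 1 →
      Szero (mediant x ξ) = Szero ξ + 1 ∧ Szero (mediant ξ y) = Szero ξ + 1 ∧
      ∃ (L₁ : List (ℤ × ℕ)) (e' : ℤ) (a' : ℕ), L₀ = L₁ ++ [(e', a')] ∧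
        ({mediant x ξ, mediant ξ y} : Set ℚ) =
          {ocfEval (L₁ ++ [(e', a' + 2)]), ocfEval (L ++ [(1, 1)])}) ∧
    (1 < a →
      ((Szero (mediant x ξ) = Szero ξ + 1 ∧ Szero (mediant ξ y) = Szero ξ + 2) ∨
       (Szero (mediant x ξ) = Szero ξ + 2 ∧ Szero (mediant ξ y) = Szero ξ + 1)) ∧
      ({mediant x ξ, mediant ξ y} : Set ℚ) =
        {ocfEval (L ++ [(1, 1)]), ocfEval (L ++ [(-1, 1), (1, 1)])}) := by
  have hR : Rrel x y := SBConsecutive_Rrel hxy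
  have hmednum := mediant_num_den hR
  have hξnum : ξ.num = x.num + y.num := by rw [hξ]; exact hmednum.1
  have hξden : (ξ.den : ℤ) = (x.den : ℤ) + y.den := by rw [hξ]; exact hmednum.2
  obtain ⟨hvL, hsign, hevL⟩ := hL
  have hLne : L ≠ [] := by
    intro h
    rw [h] at hevL
    simp [ocfEval] at hevL
    rw [hevL] at hξ0
    exact absurd hξ0 (lt_irrefl _)
  have hL11 : L ≠ [((1:ℤ),(1:ℕ))] := by
    intro h
    rw [h] at hevL
    norm_num [ocfEval] at hevL
    rw [hevL] at hξ1
    exact absurd hξ1 (lt_irrefl _)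
  obtain ⟨hD1, hBD⟩ := ocf_eval_mat L hvL
  have hdet := ocf_det L hvL
  have hC1 : 1 ≤ mC L := (ocf_C L hvL).2.1 hLne
  have hK : 1 ≤ mD L - mC L := by
    obtain ⟨k0, k1, -⟩ := ocf_K L.length L (le_refl _) hvL
    rcases lt_or_eq_of_le k0 with h | h
    · linarith
    · exact absurd (k1 h.symm) hL11
  -- ξ in lowest terms is mB L / mD L
  have hD0 : (0:ℤ) < mD L := by linarith
  have hC0 : (0:ℤ) < mC L := by linarith
  have hDC0 : (0:ℤ) < mD L - mC L := by linarith
  have hcopBD : IsCoprime (mB L) (mD L) := by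
    rcases hdet with h | h
    · exact ⟨-mC L, mA L, by linarith⟩
    · exact ⟨mC L, -mA L, by linarith⟩
  have hcopAC : IsCoprime (mA L) (mC L) := by
    rcases hdet with h | h
    · exact ⟨mD L, -mB L, by linarith⟩
    · exact ⟨-mD L, mB L, by linarith⟩
  have hcopW : IsCoprime (mB L - mA L) (mD L - mC L) := by
    rcases hdet with h | h
    · exact ⟨-mC L, mA L, by ring_nf; ring_nf at h; linarith⟩
    · exact ⟨mC L, -mA L, by ring_nf; ring_nf at h; linarith⟩
  have hξmat : ξ.num = mB L ∧ (ξ.den : ℤ) = mD L := by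
    have hx : ξ = ((mB L : ℤ) : ℚ) / ((mD L : ℤ) : ℚ) := by rw [hevL, hBD]
    constructor
    · rw [hx]; exact Rat.num_div_eq_of_coprime hD0 (Int.isCoprime_iff_gcd_eq_one.mp hcopBD)
    · rw [hx, Rat.den_div_eq_of_coprime hD0 (Int.isCoprime_iff_gcd_eq_one.mp hcopBD)]
  set u : ℚ := ((mA L : ℤ) : ℚ) / ((mC L : ℤ) : ℚ) with hu_def
  set w : ℚ := ((mB L - mA L : ℤ) : ℚ) / ((mD L - mC L : ℤ) : ℚ) with hw_def
  have humat : u.num = mA L ∧ (u.den : ℤ) = mC L := by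
    constructor
    · rw [hu_def]; exact Rat.num_div_eq_of_coprime hC0 (Int.isCoprime_iff_gcd_eq_one.mp hcopAC)
    · rw [hu_def, Rat.den_div_eq_of_coprime hC0 (Int.isCoprime_iff_gcd_eq_one.mp hcopAC)]
  have hwmat : w.num = mB L - mA L ∧ (w.den : ℤ) = mD L - mC L := by
    constructor
    · rw [hw_def]; exact Rat.num_div_eq_of_coprime hDC0 (Int.isCoprime_iff_gcd_eq_one.mp hcopW)
    · rw [hw_def, Rat.den_div_eq_of_coprime hDC0 (Int.isCoprime_iff_gcd_eq_one.mp hcopW)]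
  -- y satisfies the unimodularity equation with ξ
  have hypar : y.num * (ξ.den : ℤ) - ξ.num * (y.den : ℤ) = 1 := by
    have h2 := hR.2
    rw [hξnum, hξden]; ring_nf; ring_nf at h2; linarith
  have hydlt : (y.den : ℤ) < (ξ.den : ℤ) := by
    have : (1:ℤ) ≤ x.den := by exact_mod_cast x.pos
    rw [hξden]; linarith
  -- facts about the last entry (e,a)
  have hvlast : ocfValid [(e,a)] := ocf_valid_suffix L₀ [(e,a)] (by rw [← hsplit]; exact hvL)
  have ha_pos : 0 < a := hvlast.2.2.1
  have ha_odd : Odd a := hvlast.2.1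
  have hlast? : L.getLast? = some (e,a) := by rw [hsplit]; exact List.getLast?_concat
  -- child 1 : L ++ [(1,1)]
  have hv1 : ocfValid (L ++ [((1:ℤ),(1:ℕ))]) := by
    apply ocf_valid_append L _ hvL valid_one
    intro e₀ a₀ e₁ a₁ M' hl hM
    rw [hlast?] at hl
    obtain ⟨rfl, rfl⟩ : e = e₀ ∧ a = a₀ := by
      have := Option.some.inj hl
      exact ⟨congrArg Prod.fst this, congrArg Prod.snd this⟩
    obtain ⟨rfl, -⟩ : (1:ℤ) = e₁ ∧ ([] : List (ℤ × ℕ)) = M' := by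
      have h1 := List.cons.inj hM
      exact ⟨congrArg Prod.fst h1.1, h1.2⟩
    have : (1:ℤ) ≤ (a:ℤ) := by exact_mod_cast ha_pos
    linarith
  have heval1 : ocfEval (L ++ [((1:ℤ),(1:ℕ))])
      = ((mA L + mB L : ℤ) : ℚ) / ((mC L + mD L : ℤ) : ℚ) := by
    rw [(ocf_eval_mat _ hv1).2, mB_append, mD_append, seed_one.1, seed_one.2]
    push_cast; ring_nf
  have hmed_u : mediant u ξ = ocfEval (L ++ [((1:ℤ),(1:ℕ))]) := by
    rw [heval1, mediant, humat.1, hξmat.1]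
    have hd : ((u.den + ξ.den : ℕ) : ℤ) = mC L + mD L := by
      push_cast; rw [humat.2, hξmat.2]
    have hdq : ((u.den + ξ.den : ℕ) : ℚ) = ((mC L + mD L : ℤ) : ℚ) := by exact_mod_cast hd
    rw [hdq]
  have hmed_w : mediant ξ w = ((2*mB L - mA L : ℤ) : ℚ) / ((2*mD L - mC L : ℤ) : ℚ) := by
    rw [mediant, hξmat.1, hwmat.1]
    have hd : ((ξ.den + w.den : ℕ) : ℤ) = 2*mD L - mC L := by
      push_cast; rw [hξmat.2, hwmat.2]; ring
    have hdq : ((ξ.den + w.den : ℕ) : ℚ) = ((2*mD L - mC L : ℤ) : ℚ) := by exact_mod_cast hd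
    rw [hdq]
    congr 1
    push_cast; ring
  have hsign1 : ∀ e' a' t', L ++ [((1:ℤ),(1:ℕ))] = (e',a')::t' → e' = 1 := by
    rcases L with _ | ⟨⟨e₁,a₁⟩, t₁⟩
    · exact absurd rfl hLne
    · intro e' a' t' h
      rw [List.cons_append] at h
      obtain ⟨h1, -⟩ := List.cons.inj h
      have he₁ : e₁ = e' := congrArg Prod.fst h1
      rw [← he₁]
      exact hsign e₁ a₁ t₁ rfl
  have hZ1 : ZeroRep (mediant u ξ) (L ++ [((1:ℤ),(1:ℕ))]) := ⟨hv1, hsign1, hmed_u⟩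
  have hSξ : Szero ξ = qsum L := Szero_eq ⟨hvL, hsign, hevL⟩
  have hq1 : Szero (mediant u ξ) = Szero ξ + 1 := by
    rw [Szero_eq hZ1, qsum_append, hSξ]
    norm_num [qsum]
  -- identification of x and y
  have hxid : (x = w ∧ y = u) ∨ (x = u ∧ y = w) := by
    have hwden_lt : (w.den : ℤ) < (ξ.den : ℤ) := by rw [hwmat.2, hξmat.2]; linarith
    have huden_lt : (u.den : ℤ) < (ξ.den : ℤ) := by rw [humat.2, hξmat.2]; linarith
    have hxnum_eq : x.num = ξ.num - y.num := by linarith [hξnum]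
    have hxden_eq : (x.den : ℤ) = (ξ.den : ℤ) - y.den := by linarith [hξden]
    rcases hdet with h | h
    · -- det = 1 : y = u
      have hupar : u.num * (ξ.den : ℤ) - ξ.num * (u.den : ℤ) = 1 := by
        rw [humat.1, humat.2, hξmat.1, hξmat.2]; linarith
      have hy : y = u := upper_parent_unique hypar hupar hydlt huden_lt
      left
      refine ⟨Rat.ext ?_ ?_, hy⟩
      · rw [hwmat.1, hxnum_eq, hy, humat.1, hξmat.1]
      · have : (x.den : ℤ) = (w.den : ℤ) := by
          rw [hwmat.2, hxden_eq, hy, humat.2, hξmat.2]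
        exact_mod_cast this
    · -- det = -1 : y = w
      have hwpar : w.num * (ξ.den : ℤ) - ξ.num * (w.den : ℤ) = 1 := by
        rw [hwmat.1, hwmat.2, hξmat.1, hξmat.2]; linarith
      have hy : y = w := upper_parent_unique hypar hwpar hydlt hwden_lt
      right
      refine ⟨Rat.ext ?_ ?_, hy⟩
      · rw [humat.1, hxnum_eq, hy, hwmat.1, hξmat.1]; ring
      · have : (x.den : ℤ) = (u.den : ℤ) := by
          rw [humat.2, hxden_eq, hy, hwmat.2, hξmat.2]; ring
        exact_mod_cast this
  constructor
  · -- a = 1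
    intro ha1
    subst ha1
    have he1 : e = 1 := ocf_last_one L₀ e (by rw [← hsplit]; exact hvL)
    subst he1
    have hL₀ne : L₀ ≠ [] := by
      rintro rfl
      exact hL11 (by simpa using hsplit)
    obtain ⟨L₁, ⟨e', a'⟩, hL₀⟩ := L₀.eq_nil_or_concat'.resolve_left hL₀ne
    have hLsplit2 : L = L₁ ++ [(e',a'), ((1:ℤ),(1:ℕ))] := by
      rw [hsplit, hL₀]; simp
    have hv2 : ocfValid (L₁ ++ [(e', a'+2)]) :=
      ocf_valid_replace L₁ (by rw [← hLsplit2]; exact hvL)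
    have hmatL : mB L = e' * mA L₁ + ((a':ℤ)+1) * mB L₁ ∧
        mD L = e' * mC L₁ + ((a':ℤ)+1) * mD L₁ ∧
        mA L = e' * mA L₁ + (a':ℤ) * mB L₁ ∧
        mC L = e' * mC L₁ + (a':ℤ) * mD L₁ := by
      rw [hLsplit2, mB_append, mD_append, mA_append, mC_append,
        (seed_pair e' a').1, (seed_pair e' a').2, (seedA_pair e' a').1, (seedA_pair e' a').2]
      refine ⟨by ring, by ring, by ring, by ring⟩
    have heval2 : ocfEval (L₁ ++ [(e', a'+2)])
        = ((2*mB L - mA L : ℤ) : ℚ) / ((2*mD L - mC L : ℤ) : ℚ) := by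
      rw [(ocf_eval_mat _ hv2).2, mB_append, mD_append,
        (seed_gen e' (a'+2)).1, (seed_gen e' (a'+2)).2,
        hmatL.1, hmatL.2.1, hmatL.2.2.1, hmatL.2.2.2]
      push_cast; ring_nf
    have hsign2 : ∀ f b t', L₁ ++ [(e', a'+2)] = (f,b)::t' → f = 1 := by
      rcases L₁ with _ | ⟨⟨f₁,b₁⟩, t₁⟩
      · intro f b t' h
        obtain ⟨h1, -⟩ := List.cons.inj h
        have : e' = f := congrArg Prod.fst h1
        rw [← this]
        exact hsign e' a' [((1:ℤ),(1:ℕ))] (by rw [hLsplit2]; rfl)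
      · intro f b t' h
        rw [List.cons_append] at h
        obtain ⟨h1, -⟩ := List.cons.inj h
        have hf : f₁ = f := congrArg Prod.fst h1
        rw [← hf]
        exact hsign f₁ b₁ (t₁ ++ [(e',a'), ((1:ℤ),(1:ℕ))]) (by rw [hLsplit2]; rfl)
    have hZ2 : ZeroRep (mediant ξ w) (L₁ ++ [(e', a'+2)]) :=
      ⟨hv2, hsign2, hmed_w.trans heval2.symm⟩
    have hq2 : Szero (mediant ξ w) = Szero ξ + 1 := by
      rw [Szero_eq hZ2, qsum_append, hSξ, hLsplit2, qsum_append]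
      simp [qsum]
      omega
    rcases hxid with ⟨hx, hy⟩ | ⟨hx, hy⟩
    · rw [hx, hy, mediant_comm w ξ, mediant_comm ξ u]
      refine ⟨hq2, hq1, L₁, e', a', hL₀, ?_⟩
      rw [hmed_u, hZ2.2.2]
    · rw [hx, hy]
      refine ⟨hq1, hq2, L₁, e', a', hL₀, ?_⟩
      rw [hmed_u, hZ2.2.2, Set.pair_comm]
  · -- 1 < a
    intro hagt
    have ha3 : 3 ≤ a := odd_ge_three ha_odd (by omega) ha_pos
    have hv2 : ocfValid (L ++ [((-1:ℤ),(1:ℕ)), ((1:ℤ),(1:ℕ))]) := by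
      apply ocf_valid_append L _ hvL valid_two
      intro e₀ a₀ e₁ a₁ M' hl hM
      rw [hlast?] at hl
      obtain ⟨rfl, rfl⟩ : e = e₀ ∧ a = a₀ := by
        have := Option.some.inj hl
        exact ⟨congrArg Prod.fst this, congrArg Prod.snd this⟩
      obtain ⟨rfl, -⟩ : (-1:ℤ) = e₁ ∧ ([((1:ℤ),(1:ℕ))] : List (ℤ × ℕ)) = M' := by
        have h1 := List.cons.inj hM
        exact ⟨congrArg Prod.fst h1.1, h1.2⟩
      have : (3:ℤ) ≤ (a:ℤ) := by exact_mod_cast ha3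
      linarith
    have heval2 : ocfEval (L ++ [((-1:ℤ),(1:ℕ)), ((1:ℤ),(1:ℕ))])
        = ((2*mB L - mA L : ℤ) : ℚ) / ((2*mD L - mC L : ℤ) : ℚ) := by
      rw [(ocf_eval_mat _ hv2).2, mB_append, mD_append, seed_two.1, seed_two.2]
      push_cast; ring_nf
    have hsign2 : ∀ f b t', L ++ [((-1:ℤ),(1:ℕ)), ((1:ℤ),(1:ℕ))] = (f,b)::t' → f = 1 := by
      rcases L with _ | ⟨⟨e₁,a₁⟩, t₁⟩
      · exact absurd rfl hLne
      · intro f b t' h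
        rw [List.cons_append] at h
        obtain ⟨h1, -⟩ := List.cons.inj h
        have he₁ : e₁ = f := congrArg Prod.fst h1
        rw [← he₁]
        exact hsign e₁ a₁ t₁ rfl
    have hZ2 : ZeroRep (mediant ξ w) (L ++ [((-1:ℤ),(1:ℕ)), ((1:ℤ),(1:ℕ))]) :=
      ⟨hv2, hsign2, hmed_w.trans heval2.symm⟩
    have hq2 : Szero (mediant ξ w) = Szero ξ + 2 := by
      rw [Szero_eq hZ2, qsum_append, hSξ]
      norm_num [qsum]
    rcases hxid with ⟨hx, hy⟩ | ⟨hx, hy⟩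
    · rw [hx, hy, mediant_comm w ξ, mediant_comm ξ u]
      refine ⟨Or.inr ⟨hq2, hq1⟩, ?_⟩
      rw [hmed_u, hZ2.2.2, Set.pair_comm]
    · rw [hx, hy]
      refine ⟨Or.inl ⟨hq1, hq2⟩, ?_⟩
      rw [hmed_u, hZ2.2.2]


end
end
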